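/- arXiv:1706.06732 — 4 statements merged into one kernel-verified Lean document; each statement's English description precedes it below -/
import Mathlib

section
/- Suppose λ = 0, L̄'_r(0⁺) = −∞, and L̄ is right continuous at zero, i.e. lim_{t→0⁺} L̄(t) = 0. Then for every net (x_α, y_α) in [-∞,+∞]² (indexed by the same directed set A) such that (x_α) converges to −∞ and liminf_α y_α > −∞, one has limsup_α c_α·log μ_α([x_α, y_α]) = limsup_α c_α·log μ_α((x_α, y_α)) = 0 = −lim_α L̄*(x_α). -/
open Filter MeasureTheory Set Topology

noncomputable section

/-- `c · log m` as an extended real number, where `m ∈ [0,∞]`. -/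
def elog (c : ℝ) (m : ENNReal) : EReal := (c : EReal) * ENNReal.log m

/-- The generalized log-moment generating function `L̄` associated with the net
`(μ_α, c_α)` indexed by the filter `lf`:
`L̄(t) = limsup_α c_α · log ∫ exp(t·x/c_α) dμ_α(x)`. -/
def genLogMGF {ι : Type*} (lf : Filter ι) (μ : ι → Measure ℝ) (c : ι → ℝ) (t : ℝ) : EReal :=
  Filter.limsup
    (fun i => elog (c i) (∫⁻ x : ℝ, ENNReal.ofReal (Real.exp (t * x / c i)) ∂ (μ i))) lf

/-- Legendre–Fenchel transform of an `EReal`-valued function on `ℝ`, evaluated at an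
extended real argument: `L*(x) = sup_t (t·x − L(t))`. -/
def LegendreEE (L : ℝ → EReal) (x : EReal) : EReal := ⨆ t : ℝ, ((t : EReal) * x - L t)

open Classical in
/-- The right derivative of a convex `EReal`-valued function at `t`, with the conventions
`L'_r(t) = +∞` when `L(s) = +∞` for all `s > t` and `L'_r(t) = -∞` when `L(s) = -∞` for
some `s > t`; otherwise it is the infimum of the right difference quotients. -/
def rightDerivE (L : ℝ → EReal) (t : ℝ) : EReal :=
  if ∀ s : ℝ, t < s → L s = ⊤ then ⊤
  else if ∃ s : ℝ, t < s ∧ L s = ⊥ then ⊥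
  else ⨅ s ∈ Set.Ioi t, (L s - L t) * (((s - t)⁻¹ : ℝ) : EReal)

/-- The left derivative of a convex `EReal`-valued function at `t` (supremum of left
difference quotients). -/
def leftDerivE (L : ℝ → EReal) (t : ℝ) : EReal :=
  ⨆ s ∈ Set.Iio t, (L t - L s) * (((t - s)⁻¹ : ℝ) : EReal)

/-- Right limit at `a` of an `EReal`-valued function (as a `limsup`; it coincides with
`lim_{t→a⁺} f(t)` whenever the latter exists, e.g. for monotone or convex `f`). -/
def rightLimE (f : ℝ → EReal) (a : ℝ) : EReal := Filter.limsup f (nhdsWithin a (Set.Ioi a))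

/-- Left limit at `a` of an `EReal`-valued function (as a `limsup`; it coincides with
`lim_{t→a⁻} f(t)` whenever the latter exists). -/
def leftLimE (f : ℝ → EReal) (a : ℝ) : EReal := Filter.limsup f (nhdsWithin a (Set.Iio a))

/-- `L` is affine on the interval `(a, b]`. -/
def AffineOnIoc (L : ℝ → EReal) (a b : ℝ) : Prop :=
  ∃ p q : ℝ, ∀ s ∈ Set.Ioc a b, L s = ((p * s + q : ℝ) : EReal)

/-- `λ̃ = sup {t > λ : L is affine on (λ, t]}` (equal to `λ` if there is no such `t`). -/
def tildeOf (L : ℝ → EReal) (lam : ℝ) : ℝ :=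
  sSup (insert lam {t : ℝ | lam < t ∧ AffineOnIoc L lam t})

/-- Differentiability at `t` of an `EReal`-valued function: `L(t)` is finite and the
difference quotients converge to a (finite) real number. -/
def EDifferentiableAt (L : ℝ → EReal) (t : ℝ) : Prop :=
  (∃ r : ℝ, L t = (r : EReal)) ∧
  ∃ d : ℝ, Filter.Tendsto (fun s => (L s - L t) * (((s - t)⁻¹ : ℝ) : EReal))
    (nhdsWithin t {t}ᶜ) (nhds (d : EReal))

/-- The function `l₀(x) = − lim_{ε→0⁺} limsup_α c_α · log μ_α((x−ε, x+ε))` (the limit over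
`ε` exists by monotonicity and equals the infimum). -/
def l0fun {ι : Type*} (lf : Filter ι) (μ : ι → Measure ℝ) (c : ι → ℝ) (x : ℝ) : EReal :=
  - ⨅ ε ∈ Set.Ioi (0:ℝ),
      Filter.limsup (fun i => elog (c i) (μ i (Set.Ioo (x - ε) (x + ε)))) lf

/-- `L` restricted to `[0,∞)` is proper: `(−∞,+∞]`-valued with at least one finite value. -/
def LbarProper (L : ℝ → EReal) : Prop :=
  (∀ t : ℝ, 0 ≤ t → L t ≠ ⊥) ∧ ∃ t : ℝ, 0 ≤ t ∧ L t ≠ ⊤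

/-- `μ([x, y])` for extended-real endpoints `x, y`, with `μ` regarded as a measure on
`[-∞, +∞]`. -/
def muIccE (μ : Measure ℝ) (x y : EReal) : ENNReal :=
  μ {z : ℝ | x ≤ (z : EReal) ∧ (z : EReal) ≤ y}

/-- `μ((x, y))` for extended-real endpoints `x, y`. -/
def muIooE (μ : Measure ℝ) (x y : EReal) : ENNReal :=
  μ {z : ℝ | x < (z : EReal) ∧ (z : EReal) < y}

open Classical in
/-- The Legendre transform extended to `[-∞,+∞]` by continuity, with the paper's
convention `L̄*(−∞) = −L̄(0⁺)`. -/
def LegendreExt (L : ℝ → EReal) (x : EReal) : EReal :=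
  if x = ⊥ then -(rightLimE L 0) else if x = ⊤ then ⊤ else LegendreEE L x

end


noncomputable section

namespace LDPAux


/-- Multiplication by a positive real as an order isomorphism of `EReal`. -/
def mulIso (d : ℝ) (hd : 0 < d) : EReal ≃o EReal where
  toFun x := (d : EReal) * x
  invFun x := ((d⁻¹ : ℝ) : EReal) * x
  left_inv x := by
    show ((d⁻¹:ℝ):EReal) * ((d:EReal) * x) = x
    rw [← mul_assoc, ← EReal.coe_mul, inv_mul_cancel₀ hd.ne', EReal.coe_one, one_mul]
  right_inv x := by
    show ((d:EReal)) * (((d⁻¹:ℝ):EReal) * x) = x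
    rw [← mul_assoc, ← EReal.coe_mul, mul_inv_cancel₀ hd.ne', EReal.coe_one, one_mul]
  map_rel_iff' := by
    intro a b
    show (d : EReal) * a ≤ (d : EReal) * b ↔ a ≤ b
    constructor
    · intro h
      have h2 := mul_le_mul_of_nonneg_left h
        (le_of_lt (by exact_mod_cast inv_pos.2 hd : (0:EReal) < ((d⁻¹:ℝ) : EReal)))
      rw [← mul_assoc, ← mul_assoc, ← EReal.coe_mul, inv_mul_cancel₀ hd.ne', EReal.coe_one,
        one_mul, one_mul] at h2
      exact h2
    · intro h
      exact mul_le_mul_of_nonneg_left h (le_of_lt (by exact_mod_cast hd))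

@[simp] lemma mulIso_apply (d : ℝ) (hd : 0 < d) (x : EReal) :
    mulIso d hd x = (d : EReal) * x := rfl

lemma const_mul_le_const_mul_iff {d : ℝ} (hd : 0 < d) {x y : EReal} :
    (d : EReal) * x ≤ (d : EReal) * y ↔ x ≤ y := (mulIso d hd).le_iff_le

lemma limsup_const_mul {ι : Type*} {f : Filter ι} {d : ℝ} (hd : 0 < d) (u : ι → EReal) :
    Filter.limsup (fun i => (d : EReal) * u i) f = (d : EReal) * Filter.limsup u f :=
  ((mulIso d hd).limsup_apply).symm

lemma liminf_const_mul {ι : Type*} {f : Filter ι} {d : ℝ} (hd : 0 < d) (u : ι → EReal) :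
    Filter.liminf (fun i => (d : EReal) * u i) f = (d : EReal) * Filter.liminf u f :=
  ((mulIso d hd).liminf_apply).symm

lemma log_ofReal_exp (a : ℝ) : ENNReal.log (ENNReal.ofReal (Real.exp a)) = (a : EReal) := by
  rw [ENNReal.log_ofReal_of_pos (Real.exp_pos _), Real.log_exp]

/-- `c * log m ≤ a  ↔  m ≤ exp (a / c)` for `c > 0`. -/
lemma const_mul_log_le_iff {cc : ℝ} (hc : 0 < cc) {m : ENNReal} {a : ℝ} :
    (cc : EReal) * ENNReal.log m ≤ (a : EReal) ↔ m ≤ ENNReal.ofReal (Real.exp (a / cc)) := by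
  have h1 : (a : EReal) = (cc : EReal) * ((a / cc : ℝ) : EReal) := by
    rw [← EReal.coe_mul, mul_div_cancel₀ a hc.ne']
  rw [h1, const_mul_le_const_mul_iff hc, ← log_ofReal_exp (a / cc), ENNReal.log_le_log_iff]

lemma le_const_mul_log_iff {cc : ℝ} (hc : 0 < cc) {m : ENNReal} {a : ℝ} :
    (a : EReal) ≤ (cc : EReal) * ENNReal.log m ↔ ENNReal.ofReal (Real.exp (a / cc)) ≤ m := by
  have h1 : (a : EReal) = (cc : EReal) * ((a / cc : ℝ) : EReal) := by
    rw [← EReal.coe_mul, mul_div_cancel₀ a hc.ne']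
  rw [h1, const_mul_le_const_mul_iff hc, ← log_ofReal_exp (a / cc), ENNReal.log_le_log_iff]

/-- distributivity of a positive real multiple over a sum avoiding `⊥`. -/
lemma pos_mul_add {cc a b : ℝ} (hc : 0 < cc) (ha : 0 < a) (hb : 0 < b) {X Y : EReal}
    (hX : X ≠ ⊥) (hY : Y ≠ ⊥) :
    (cc : EReal) * ((a : EReal) * X + (b : EReal) * Y)
      = (a : EReal) * ((cc : EReal) * X) + (b : EReal) * ((cc : EReal) * Y) := by
  induction X using EReal.rec with
  | bot => exact absurd rfl hX
  | top =>
    induction Y using EReal.rec with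
    | bot => exact absurd rfl hY
    | top =>
      rw [EReal.coe_mul_top_of_pos ha, EReal.coe_mul_top_of_pos hb,
        EReal.coe_mul_top_of_pos hc, EReal.top_add_top, EReal.coe_mul_top_of_pos hc,
        EReal.coe_mul_top_of_pos ha, EReal.coe_mul_top_of_pos hb, EReal.top_add_top]
    | coe y =>
      rw [EReal.coe_mul_top_of_pos ha, ← EReal.coe_mul, EReal.top_add_coe,
        EReal.coe_mul_top_of_pos hc, EReal.coe_mul_top_of_pos ha, ← EReal.coe_mul,
        ← EReal.coe_mul, EReal.top_add_coe]
  | coe x =>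
    induction Y using EReal.rec with
    | bot => exact absurd rfl hY
    | top =>
      rw [EReal.coe_mul_top_of_pos hb, ← EReal.coe_mul, EReal.coe_add_top,
        EReal.coe_mul_top_of_pos hc, EReal.coe_mul_top_of_pos hb, ← EReal.coe_mul,
        ← EReal.coe_mul, EReal.coe_add_top]
    | coe y =>
      norm_cast
      ring



/-- The integrand of the moment generating function. -/
def mgfInt (cc t : ℝ) : ℝ → ENNReal := fun z => ENNReal.ofReal (Real.exp (t * z / cc))

lemma mgfInt_meas (cc t : ℝ) : Measurable (mgfInt cc t) :=
  (Real.continuous_exp.comp ((continuous_const.mul continuous_id).div_const cc)).measurable.ennreal_ofReal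

lemma mgfInt_pos (cc t : ℝ) (z : ℝ) : 0 < mgfInt cc t z :=
  ENNReal.ofReal_pos.2 (Real.exp_pos _)

/-- The moment generating function integral. -/
def II (μ : Measure ℝ) (cc t : ℝ) : ENNReal := ∫⁻ z : ℝ, mgfInt cc t z ∂μ

lemma II_pos (μ : Measure ℝ) [IsProbabilityMeasure μ] (cc t : ℝ) : 0 < II μ cc t := by
  rw [II, lintegral_pos_iff_support (mgfInt_meas cc t)]
  have : Function.support (mgfInt cc t) = Set.univ := by
    ext z; simp [Function.mem_support, (mgfInt_pos cc t z).ne']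
  rw [this]
  simp [IsProbabilityMeasure.ne_zero μ]

lemma II_zero (μ : Measure ℝ) [IsProbabilityMeasure μ] (cc : ℝ) : II μ cc 0 = 1 := by
  rw [II]
  have : (mgfInt cc 0) = fun _ => (1 : ENNReal) := by
    ext z; simp [mgfInt]
  rw [this, lintegral_one, measure_univ]

/-- Pointwise Hölder: convexity of `t ↦ II μ cc t` in multiplicative form. -/
lemma II_holder (μ : Measure ℝ) (cc : ℝ) {p q r : ℝ} (hpq : p < q) (hqr : q < r) :
    II μ cc q ≤ (II μ cc p) ^ ((r - q) / (r - p)) * (II μ cc r) ^ ((q - p) / (r - p)) := by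
  set a : ℝ := (r - q) / (r - p) with ha_def
  set b : ℝ := (q - p) / (r - p) with hb_def
  have hrp : (0:ℝ) < r - p := by linarith
  have ha : 0 < a := div_pos (by linarith) hrp
  have hb : 0 < b := div_pos (by linarith) hrp
  have hab : a + b = 1 := by rw [ha_def, hb_def]; field_simp; ring
  have hconj : (a⁻¹).HolderConjugate b⁻¹ := Real.HolderConjugate.inv_inv ha hb hab
  have key := ENNReal.lintegral_mul_le_Lp_mul_Lq μ hconj
    (f := fun z => (mgfInt cc p z) ^ a) (g := fun z => (mgfInt cc r z) ^ b)
    ((mgfInt_meas cc p).pow_const a).aemeasurable ((mgfInt_meas cc r).pow_const b).aemeasurable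
  have hfact : ∀ z : ℝ, mgfInt cc q z = (mgfInt cc p z) ^ a * (mgfInt cc r z) ^ b := by
    intro z
    rw [mgfInt, mgfInt, mgfInt,
      ENNReal.ofReal_rpow_of_pos (Real.exp_pos _), ENNReal.ofReal_rpow_of_pos (Real.exp_pos _),
      ← Real.exp_mul, ← Real.exp_mul, ← ENNReal.ofReal_mul (Real.exp_pos _).le, ← Real.exp_add]
    congr 2
    have hq : q = a * p + b * r := by
      rw [ha_def, hb_def]; field_simp; ring
    rw [hq]; ring
  have h1 : II μ cc q = ∫⁻ z, ((fun z => (mgfInt cc p z) ^ a) * fun z => (mgfInt cc r z) ^ b) z ∂μ := by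
    rw [II]
    congr 1
    ext z
    exact hfact z
  rw [h1]
  refine key.trans (le_of_eq ?_)
  have e1 : ∀ z:ℝ, ((mgfInt cc p z) ^ a) ^ (a⁻¹) = mgfInt cc p z := by
    intro z; rw [← ENNReal.rpow_mul, mul_inv_cancel₀ ha.ne', ENNReal.rpow_one]
  have e2 : ∀ z:ℝ, ((mgfInt cc r z) ^ b) ^ (b⁻¹) = mgfInt cc r z := by
    intro z; rw [← ENNReal.rpow_mul, mul_inv_cancel₀ hb.ne', ENNReal.rpow_one]
  simp only [e1, e2, one_div, inv_inv]
  rfl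


lemma pos_mul_ne_bot {cc : ℝ} (hc : 0 < cc) {X : EReal} (hX : X ≠ ⊥) : (cc : EReal) * X ≠ ⊥ := by
  induction X using EReal.rec with
  | bot => exact absurd rfl hX
  | top => rw [EReal.coe_mul_top_of_pos hc]; exact top_ne_bot
  | coe x => rw [← EReal.coe_mul]; exact EReal.coe_ne_bot _

lemma elog_II_ne_bot (μ : Measure ℝ) [IsProbabilityMeasure μ] {cc : ℝ} (hc : 0 < cc) (t : ℝ) :
    elog cc (II μ cc t) ≠ ⊥ :=
  pos_mul_ne_bot hc (by simpa using (II_pos μ cc t).ne')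

lemma elog_mono {cc : ℝ} (hc : 0 ≤ cc) {m m' : ENNReal} (h : m ≤ m') :
    elog cc m ≤ elog cc m' :=
  mul_le_mul_of_nonneg_left (ENNReal.log_monotone h) (by exact_mod_cast hc)

/-- Pointwise convexity of `t ↦ elog cc (II μ cc t)`. -/
lemma elog_II_convex (μ : Measure ℝ) [IsProbabilityMeasure μ] {cc : ℝ} (hc : 0 < cc)
    {p q r : ℝ} (hpq : p < q) (hqr : q < r) :
    elog cc (II μ cc q) ≤ (((r - q) / (r - p) : ℝ) : EReal) * elog cc (II μ cc p)
      + (((q - p) / (r - p) : ℝ) : EReal) * elog cc (II μ cc r) := by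
  have hrp : (0:ℝ) < r - p := by linarith
  have ha : 0 < (r - q) / (r - p) := div_pos (by linarith) hrp
  have hb : 0 < (q - p) / (r - p) := div_pos (by linarith) hrp
  have h1 : ENNReal.log (II μ cc q)
      ≤ (((r - q) / (r - p) : ℝ) : EReal) * ENNReal.log (II μ cc p)
        + (((q - p) / (r - p) : ℝ) : EReal) * ENNReal.log (II μ cc r) := by
    refine le_trans (ENNReal.log_monotone (II_holder μ cc hpq hqr)) (le_of_eq ?_)
    rw [ENNReal.log_mul_add, ENNReal.log_rpow, ENNReal.log_rpow]
  have h2 := mul_le_mul_of_nonneg_left h1 (by exact_mod_cast hc.le : (0:EReal) ≤ (cc : EReal))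
  refine h2.trans (le_of_eq ?_)
  exact pos_mul_add hc ha hb (by simpa using (II_pos μ cc p).ne') (by simpa using (II_pos μ cc r).ne')

lemma setLint_le (μ : Measure ℝ) {cc : ℝ} (hc : 0 < cc) (t : ℝ) {S : Set ℝ} {w : ℝ}
    (hw : ∀ z ∈ S, t * z ≤ w) :
    ∫⁻ z in S, mgfInt cc t z ∂μ ≤ ENNReal.ofReal (Real.exp (w / cc)) * μ S := by
  have h := setLIntegral_mono (μ := μ) (s := S) (f := mgfInt cc t)
    (g := fun _ => ENNReal.ofReal (Real.exp (w / cc))) measurable_const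
    (fun z hz => ENNReal.ofReal_le_ofReal (Real.exp_le_exp.2 ((div_le_div_iff_of_pos_right hc).2 (hw z hz))))
  simpa [setLIntegral_const] using h

lemma setLint_ge (μ : Measure ℝ) {cc : ℝ} (hc : 0 < cc) (t : ℝ) {S : Set ℝ} {w : ℝ}
    (hw : ∀ z ∈ S, w ≤ t * z) :
    ENNReal.ofReal (Real.exp (w / cc)) * μ S ≤ ∫⁻ z in S, mgfInt cc t z ∂μ := by
  have h := setLIntegral_mono (μ := μ) (s := S) (f := fun _ => ENNReal.ofReal (Real.exp (w / cc)))
    (g := mgfInt cc t) (mgfInt_meas cc t)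
    (fun z hz => ENNReal.ofReal_le_ofReal (Real.exp_le_exp.2 ((div_le_div_iff_of_pos_right hc).2 (hw z hz))))
  simpa [setLIntegral_const] using h

lemma II_split (μ : Measure ℝ) (cc t R' b V : ℝ) (h1 : R' ≤ b) (h2 : b ≤ V) :
    II μ cc t = (∫⁻ z in Iio R', mgfInt cc t z ∂μ) + (∫⁻ z in Icc R' b, mgfInt cc t z ∂μ)
      + (∫⁻ z in Ioc b V, mgfInt cc t z ∂μ) + (∫⁻ z in Ioi V, mgfInt cc t z ∂μ) := by
  have d1 : Disjoint (Icc R' b) (Ioi b) := by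
    rw [Set.disjoint_left]; rintro z ⟨_, hzb⟩ hz; exact absurd hzb (not_le.2 hz)
  have d2 : Disjoint (Ioc b V) (Ioi V) := by
    rw [Set.disjoint_left]; rintro z ⟨_, hzV⟩ hz; exact absurd hzV (not_le.2 hz)
  have e1 : (∫⁻ z in Iio R', mgfInt cc t z ∂μ) + (∫⁻ z in Ici R', mgfInt cc t z ∂μ) = II μ cc t := by
    have := lintegral_add_compl (mgfInt cc t) (measurableSet_Iio (a := R')) (μ := μ)
    rwa [compl_Iio] at this
  have e2 : (∫⁻ z in Ici R', mgfInt cc t z ∂μ)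
      = (∫⁻ z in Icc R' b, mgfInt cc t z ∂μ) + (∫⁻ z in Ioi b, mgfInt cc t z ∂μ) := by
    rw [← Set.Icc_union_Ioi_eq_Ici h1, lintegral_union measurableSet_Ioi d1]
  have e3 : (∫⁻ z in Ioi b, mgfInt cc t z ∂μ)
      = (∫⁻ z in Ioc b V, mgfInt cc t z ∂μ) + (∫⁻ z in Ioi V, mgfInt cc t z ∂μ) := by
    rw [← Set.Ioc_union_Ioi_eq_Ioi h2, lintegral_union measurableSet_Ioi d2]
  rw [← e1, e2, e3]
  ring

lemma tail_bound (μ : Measure ℝ) {cc t : ℝ} (hc : 0 < cc) (ht : 0 < t) {b' w : ℝ}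
    (hII : II μ cc t ≤ ENNReal.ofReal (Real.exp (w / cc))) :
    μ (Ioi b') ≤ ENNReal.ofReal (Real.exp ((w - t * b') / cc)) := by
  have h1 : ENNReal.ofReal (Real.exp (t * b' / cc)) * μ (Ioi b') ≤ II μ cc t := by
    refine (setLint_ge μ hc t (S := Ioi b') (w := t * b') ?_).trans ?_
    · intro z hz
      exact mul_le_mul_of_nonneg_left (le_of_lt hz) ht.le
    · exact setLIntegral_le_lintegral _ _
  have h2 : μ (Ioi b') * ENNReal.ofReal (Real.exp (t * b' / cc))
      ≤ ENNReal.ofReal (Real.exp (w / cc)) := by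
    rw [mul_comm]; exact h1.trans hII
  have h3 := (ENNReal.le_div_iff_mul_le
    (Or.inl (by simp [Real.exp_pos] : ENNReal.ofReal (Real.exp (t * b' / cc)) ≠ 0))
    (Or.inl ENNReal.ofReal_ne_top)).2 h2
  refine h3.trans (le_of_eq ?_)
  rw [← ENNReal.ofReal_div_of_pos (Real.exp_pos _), ← Real.exp_sub, ← sub_div]

section Net

variable {ι : Type*} (lf : Filter ι) [lf.NeBot]
  (μ : ι → Measure ℝ) [∀ i, IsProbabilityMeasure (μ i)]
  (c : ι → ℝ)

/-- The individual log-MGF functionals. -/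
def Lam (i : ι) (t : ℝ) : EReal := elog (c i) (II (μ i) (c i) t)

lemma genLogMGF_eq (t : ℝ) :
    genLogMGF lf μ c t = Filter.limsup (fun i => Lam μ c i t) lf := rfl

lemma Lam_zero (hc : ∀ i, 0 < c i) (i : ι) : Lam μ c i 0 = 0 := by
  rw [Lam, II_zero, elog]
  simp

lemma L_zero (hc : ∀ i, 0 < c i) : genLogMGF lf μ c 0 = 0 := by
  rw [genLogMGF_eq]
  have : (fun i => Lam μ c i 0) = fun _ => (0 : EReal) := by
    ext i; exact Lam_zero μ c hc i
  rw [this, limsup_const]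

lemma Lam_ne_bot (hc : ∀ i, 0 < c i) (i : ι) (t : ℝ) : Lam μ c i t ≠ ⊥ :=
  elog_II_ne_bot (μ i) (hc i) t

lemma Lam_convex (hc : ∀ i, 0 < c i) (i : ι) {p q r : ℝ} (hpq : p < q) (hqr : q < r) :
    Lam μ c i q ≤ (((r - q) / (r - p) : ℝ) : EReal) * Lam μ c i p
      + (((q - p) / (r - p) : ℝ) : EReal) * Lam μ c i r :=
  elog_II_convex (μ i) (hc i) hpq hqr

/-- Chord inequality through the origin. -/
lemma L_chord (hc : ∀ i, 0 < c i) {t s : ℝ} (ht : 0 < t) (hts : t < s) :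
    genLogMGF lf μ c t ≤ ((t / s : ℝ) : EReal) * genLogMGF lf μ c s := by
  have hpt : ∀ i, Lam μ c i t ≤ ((t / s : ℝ) : EReal) * Lam μ c i s := by
    intro i
    have h := Lam_convex μ c hc i (p := 0) (q := t) (r := s) ht hts
    rw [Lam_zero μ c hc i, mul_zero, zero_add, sub_zero, sub_zero] at h
    exact h
  rw [genLogMGF_eq, genLogMGF_eq, ← limsup_const_mul (div_pos ht (ht.trans hts))]
  exact Filter.limsup_le_limsup (Filter.Eventually.of_forall hpt)

/-- `⊥` propagates to the left of a `⊥` value (above a finite value). -/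
lemma L_bot_prop (hc : ∀ i, 0 < c i) {p u s : ℝ} (hpu : p < u) (hus : u < s) {rp : ℝ}
    (hp : genLogMGF lf μ c p = (rp : EReal)) (hs : genLogMGF lf μ c s = ⊥) :
    genLogMGF lf μ c u = ⊥ := by
  have hsp : (0:ℝ) < s - p := by linarith
  have ha : 0 < (s - u) / (s - p) := div_pos (by linarith) hsp
  have hb : 0 < (u - p) / (s - p) := div_pos (by linarith) hsp
  set v : ι → EReal := fun i => (((u - p) / (s - p) : ℝ) : EReal) * Lam μ c i s with hv
  set w : ι → EReal := fun i => (((s - u) / (s - p) : ℝ) : EReal) * Lam μ c i p with hw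
  have hvw : ∀ i, Lam μ c i u ≤ (v + w) i := by
    intro i
    have h := Lam_convex μ c hc i hpu hus
    rw [hv, hw]
    simpa [add_comm] using h
  have hvbot : Filter.limsup v lf = ⊥ := by
    rw [hv, limsup_const_mul hb, ← genLogMGF_eq, hs, EReal.coe_mul_bot_of_pos hb]
  have hwne : Filter.limsup w lf ≠ ⊤ := by
    rw [hw, limsup_const_mul ha, ← genLogMGF_eq, hp, ← EReal.coe_mul]
    exact EReal.coe_ne_top _
  have := EReal.limsup_add_bot_of_ne_top (f := lf) hvbot hwne
  rw [genLogMGF_eq]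
  refine le_bot_iff.1 ?_
  calc Filter.limsup (fun i => Lam μ c i u) lf ≤ Filter.limsup (v + w) lf :=
    Filter.limsup_le_limsup (Filter.Eventually.of_forall hvw)
  _ = ⊥ := this

end Net

/-- Extraction of a small ball from right-continuity at `0`. -/
lemma tendsto_ball {L : ℝ → EReal} (hrc : Filter.Tendsto L (nhdsWithin 0 (Set.Ioi 0)) (nhds 0))
    {η : ℝ} (hη : 0 < η) :
    ∃ δ > 0, ∀ s : ℝ, 0 < s → s < δ → ∃ r : ℝ, L s = (r : EReal) ∧ |r| < η := by
  have h1 : ∀ᶠ s in nhdsWithin 0 (Set.Ioi 0), L s ∈ Ioo ((-η : ℝ) : EReal) ((η : ℝ) : EReal) := by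
    refine hrc (Ioo_mem_nhds ?_ ?_)
    · exact_mod_cast neg_neg_of_pos hη
    · exact_mod_cast hη
  obtain ⟨δ, hδ, h⟩ := (nhdsGT_basis (0:ℝ)).eventually_iff.1 h1
  refine ⟨δ, hδ, fun s hs hsδ => ?_⟩
  obtain ⟨h2, h3⟩ := h ⟨hs, hsδ⟩
  have hne_bot : L s ≠ ⊥ := fun hbot => by simp [hbot] at h2
  have hne_top : L s ≠ ⊤ := fun htop => by simp [htop] at h3
  refine ⟨(L s).toReal, (EReal.coe_toReal hne_top hne_bot).symm, ?_⟩
  rw [← EReal.coe_toReal hne_top hne_bot] at h2 h3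
  rw [abs_lt]
  exact ⟨by exact_mod_cast h2, by exact_mod_cast h3⟩

section Net2

variable {ι : Type*} (lf : Filter ι) [lf.NeBot]
  (μ : ι → Measure ℝ) [∀ i, IsProbabilityMeasure (μ i)]
  (c : ι → ℝ)

/-- No `⊥` values on `(0, ∞)` under right-continuity at `0⁺`. -/
lemma L_ne_bot (hc : ∀ i, 0 < c i)
    (hrc : Filter.Tendsto (genLogMGF lf μ c) (nhdsWithin 0 (Set.Ioi 0)) (nhds 0))
    {u : ℝ} (hu : 0 < u) : genLogMGF lf μ c u ≠ ⊥ := by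
  obtain ⟨δ, hδ, hball⟩ := tendsto_ball hrc one_pos
  intro hbot
  rcases lt_or_ge u δ with h | h
  · obtain ⟨r, hr, _⟩ := hball u hu h
    rw [hbot] at hr; exact (EReal.bot_ne_coe r) hr
  · obtain ⟨rp, hrp, _⟩ := hball (δ/2) (by linarith) (by linarith)
    have hq := L_bot_prop lf μ c hc (p := δ/2) (u := 3*δ/4) (s := u)
      (by linarith) (by linarith) hrp hbot
    obtain ⟨rq, hrq, _⟩ := hball (3*δ/4) (by linarith) (by linarith)
    rw [hq] at hrq; exact (EReal.bot_ne_coe rq) hrq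

end Net2

section Net3

variable {ι : Type*} (lf : Filter ι) [lf.NeBot]
  (μ : ι → Measure ℝ) [∀ i, IsProbabilityMeasure (μ i)]
  (c : ι → ℝ)

/-- Key lemma: arbitrarily small `t` with `L t` real and below any linear function. -/
lemma lemB (hc : ∀ i, 0 < c i)
    (hrc : Filter.Tendsto (genLogMGF lf μ c) (nhdsWithin 0 (Set.Ioi 0)) (nhds 0))
    (hbot : rightLimE (rightDerivE (genLogMGF lf μ c)) 0 = ⊥)
    (N : ℝ) {δ' : ℝ} (hδ' : 0 < δ') :
    ∃ t : ℝ, 0 < t ∧ t < δ' ∧ ∃ r : ℝ, genLogMGF lf μ c t = (r : EReal) ∧ r < -N * t := by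
  obtain ⟨δ0, hδ0, hball⟩ := tendsto_ball hrc one_pos
  have h1 : ∀ᶠ tt in nhdsWithin 0 (Set.Ioi 0),
      rightDerivE (genLogMGF lf μ c) tt < ((-N : ℝ) : EReal) := by
    have hlt : Filter.limsup (rightDerivE (genLogMGF lf μ c)) (nhdsWithin 0 (Set.Ioi 0))
        < ((-N : ℝ) : EReal) := by
      rw [show Filter.limsup (rightDerivE (genLogMGF lf μ c)) (nhdsWithin 0 (Set.Ioi 0))
          = rightLimE (rightDerivE (genLogMGF lf μ c)) 0 from rfl, hbot]
      exact EReal.bot_lt_coe _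
    exact Filter.eventually_lt_of_limsup_lt hlt
  obtain ⟨δ1, hδ1, h2⟩ := (nhdsGT_basis (0:ℝ)).eventually_iff.1 h1
  set t := min (min δ' δ0) δ1 / 2 with htdef
  have hm : 0 < min (min δ' δ0) δ1 := lt_min (lt_min hδ' hδ0) hδ1
  have ht0 : 0 < t := by positivity
  have htm : t < min (min δ' δ0) δ1 := half_lt_self hm
  have htδ' : t < δ' := htm.trans_le ((min_le_left _ _).trans (min_le_left _ _))
  have htδ0 : t < δ0 := htm.trans_le ((min_le_left _ _).trans (min_le_right _ _))
  have htδ1 : t < δ1 := htm.trans_le (min_le_right _ _)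
  obtain ⟨r, hr, hrb⟩ := hball t ht0 htδ0
  have hder : rightDerivE (genLogMGF lf μ c) t < ((-N : ℝ) : EReal) := h2 ⟨ht0, htδ1⟩
  rw [rightDerivE] at hder
  by_cases hcase1 : ∀ s : ℝ, t < s → genLogMGF lf μ c s = ⊤
  · rw [if_pos hcase1] at hder
    exact absurd hder (not_top_lt)
  rw [if_neg hcase1] at hder
  by_cases hcase2 : ∃ s : ℝ, t < s ∧ genLogMGF lf μ c s = ⊥
  · obtain ⟨s, hts, hsbot⟩ := hcase2
    exact absurd hsbot (L_ne_bot lf μ c hc hrc (ht0.trans hts))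
  rw [if_neg hcase2] at hder
  obtain ⟨s, hs⟩ := iInf_lt_iff.1 hder
  obtain ⟨hmem, hslt⟩ := iInf_lt_iff.1 hs
  have hts : t < s := hmem
  have hsne_bot : genLogMGF lf μ c s ≠ ⊥ := by
    push_neg at hcase2
    exact hcase2 s hts
  have hsne_top : genLogMGF lf μ c s ≠ ⊤ := by
    intro htop
    rw [htop, hr, EReal.top_sub_coe, EReal.top_mul_coe_of_pos (inv_pos.2 (sub_pos.2 hts))] at hslt
    exact (not_top_lt) hslt
  set rs := (genLogMGF lf μ c s).toReal with hrs
  have hseq : genLogMGF lf μ c s = (rs : EReal) := (EReal.coe_toReal hsne_top hsne_bot).symm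
  rw [hseq, hr] at hslt
  have hslt' : (rs - r) * (s - t)⁻¹ < -N := by
    have : ((rs : EReal) - (r : EReal)) * (((s - t)⁻¹ : ℝ) : EReal)
        = (((rs - r) * (s - t)⁻¹ : ℝ) : EReal) := by
      rw [← EReal.coe_sub, ← EReal.coe_mul]
    rw [this] at hslt
    exact_mod_cast hslt
  have hchord := L_chord lf μ c hc ht0 hts
  rw [hr, hseq, ← EReal.coe_mul] at hchord
  have hchord' : r ≤ t / s * rs := by exact_mod_cast hchord
  have hst : 0 < s - t := by linarith
  have hs0 : 0 < s := ht0.trans hts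
  have hkey : rs - r < -N * (s - t) := by
    calc rs - r = ((rs - r) * (s - t)⁻¹) * (s - t) := by field_simp
    _ < -N * (s - t) := mul_lt_mul_of_pos_right hslt' hst
  refine ⟨t, ht0, htδ', r, hr, ?_⟩
  -- from r ≤ (t/s) rs and rs < r - N (s - t), derive r < -N t
  have h6 : r * s ≤ t * rs := by
    have := mul_le_mul_of_nonneg_right hchord' hs0.le
    calc r * s ≤ t / s * rs * s := this
    _ = t * rs := by field_simp
  nlinarith [mul_lt_mul_of_pos_left hkey ht0]

end Net3

section Net4

variable {ι : Type*} (lf : Filter ι) [lf.NeBot]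
  (μ : ι → Measure ℝ) [∀ i, IsProbabilityMeasure (μ i)]
  (c : ι → ℝ)

/-- `L = ⊤` on the negative half-line. -/
lemma L_neg_top (hc : ∀ i, 0 < c i)
    (hrc : Filter.Tendsto (genLogMGF lf μ c) (nhdsWithin 0 (Set.Ioi 0)) (nhds 0))
    (hbot : rightLimE (rightDerivE (genLogMGF lf μ c)) 0 = ⊥)
    {s : ℝ} (hs : s < 0) : genLogMGF lf μ c s = ⊤ := by
  rw [EReal.eq_top_iff_forall_lt]
  intro K
  set N : ℝ := (K + 1) / (-s) with hN
  obtain ⟨u, hu0, _, ru, hru, hruN⟩ := lemB lf μ c hc hrc hbot N one_pos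
  have hus : s < u := hs.trans hu0
  set B : ℝ := (-s) / u with hB
  have hBpos : 0 < B := div_pos (by linarith) hu0
  -- pointwise : (-B) * Lam i u ≤ Lam i s
  have hpt : ∀ i, (((-B : ℝ)) : EReal) * Lam μ c i u ≤ Lam μ c i s := by
    intro i
    have hcv := Lam_convex μ c hc i (p := s) (q := 0) (r := u) hs hu0
    rw [Lam_zero μ c hc i] at hcv
    have hut : 0 < u - s := by linarith
    have hnbs : Lam μ c i s ≠ ⊥ := Lam_ne_bot μ c hc i s
    have hnbu : Lam μ c i u ≠ ⊥ := Lam_ne_bot μ c hc i u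
    set es := Lam μ c i s with hes
    set eu := Lam μ c i u with heu
    clear_value es eu
    induction es using EReal.rec with
    | bot => exact absurd rfl hnbs
    | top => exact le_top
    | coe zs =>
      induction eu using EReal.rec with
      | bot => exact absurd rfl hnbu
      | top =>
        rw [EReal.coe_mul_top_of_neg (by linarith : -B < 0)]
        exact bot_le
      | coe zu =>
        rw [← EReal.coe_mul, ← EReal.coe_mul, ← EReal.coe_add] at hcv
        rw [← EReal.coe_mul, EReal.coe_le_coe_iff]
        have hcv' : (0:ℝ) ≤ (u - 0) / (u - s) * zs + (0 - s) / (u - s) * zu := by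
          exact_mod_cast hcv
        rw [hB]
        have h1 : (0:ℝ) ≤ u * zs + (-s) * zu := by
          calc (0:ℝ) = 0 * (u - s) := by ring
          _ ≤ ((u - 0) / (u - s) * zs + (0 - s) / (u - s) * zu) * (u - s) := by
            exact mul_le_mul_of_nonneg_right hcv' hut.le
          _ = u * zs + (-s) * zu := by field_simp; ring
        have h2 : -(-s / u) * zu = s * zu / u := by ring
        rw [h2, div_le_iff₀ hu0]
        nlinarith
  -- limsup step
  have hstep : Filter.limsup (fun i => (((-B : ℝ)) : EReal) * Lam μ c i u) lf
      ≤ genLogMGF lf μ c s := by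
    rw [genLogMGF_eq]
    exact Filter.limsup_le_limsup (Filter.Eventually.of_forall hpt)
  have hrew : (fun i => (((-B : ℝ)) : EReal) * Lam μ c i u)
      = fun i => - (((B : ℝ) : EReal) * Lam μ c i u) := by
    ext i
    rw [EReal.coe_neg, EReal.neg_mul]
  rw [hrew] at hstep
  have hlimneg : Filter.limsup (fun i => - (((B : ℝ) : EReal) * Lam μ c i u)) lf
      = - Filter.liminf (fun i => ((B : ℝ) : EReal) * Lam μ c i u) lf :=
    EReal.limsup_neg
  rw [hlimneg, liminf_const_mul hBpos] at hstep
  have hli : Filter.liminf (fun i => Lam μ c i u) lf ≤ ((ru : ℝ) : EReal) := by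
    refine (Filter.liminf_le_limsup).trans ?_
    rw [← genLogMGF_eq, hru]
  have hBle : ((B : ℝ) : EReal) * Filter.liminf (fun i => Lam μ c i u) lf
      ≤ ((B : ℝ) : EReal) * ((ru : ℝ) : EReal) :=
    mul_le_mul_of_nonneg_left hli (by exact_mod_cast hBpos.le)
  have hfin : - (((B : ℝ) : EReal) * ((ru : ℝ) : EReal))
      ≤ genLogMGF lf μ c s := le_trans (by exact_mod_cast EReal.neg_le_neg_iff.2 hBle) hstep
  have hKlt : (K : EReal) < - (((B : ℝ) : EReal) * ((ru : ℝ) : EReal)) := by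
    rw [← EReal.coe_mul, ← EReal.coe_neg, EReal.coe_lt_coe_iff]
    have h1 : B * ru < B * (-N * u) := by
      exact mul_lt_mul_of_pos_left hruN hBpos
    have h2 : B * (-N * u) = -(K + 1) := by
      have hne : u * s ≠ 0 := mul_ne_zero (ne_of_gt hu0) (ne_of_lt hs)
      rw [hB, hN]
      field_simp [hs.ne]
    nlinarith
  exact hKlt.trans_le hfin

end Net4

section Net5

variable {ι : Type*} (lf : Filter ι) [lf.NeBot]
  (μ : ι → Measure ℝ) [∀ i, IsProbabilityMeasure (μ i)]
  (c : ι → ℝ)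

/-- Affine minorant with small constant term. -/
lemma lemA (hc : ∀ i, 0 < c i)
    (hrc : Filter.Tendsto (genLogMGF lf μ c) (nhdsWithin 0 (Set.Ioi 0)) (nhds 0))
    {ρ : ℝ} (hρ : 0 < ρ) :
    ∃ M : ℝ, 0 ≤ M ∧ ∀ t : ℝ, 0 ≤ t →
      ((-(ρ + M * t) : ℝ) : EReal) ≤ genLogMGF lf μ c t := by
  obtain ⟨δ, hδ, hball⟩ := tendsto_ball hrc (half_pos hρ)
  set t0 := δ / 2 with ht0def
  set t1 := 3 * δ / 4 with ht1def
  obtain ⟨r0, hr0, hr0b⟩ := hball t0 (by positivity) (by rw [ht0def]; linarith)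
  obtain ⟨r1, hr1, hr1b⟩ := hball t1 (by rw [ht1def]; linarith) (by rw [ht1def]; linarith)
  set m := (r1 - r0) / (t1 - t0) with hmdef
  refine ⟨|m|, abs_nonneg m, fun t htnn => ?_⟩
  rcases eq_or_lt_of_le htnn with h0 | htpos
  · rw [← h0, L_zero lf μ c hc]
    have : (-(ρ + |m| * 0) : ℝ) ≤ 0 := by simp; linarith
    exact_mod_cast this
  rcases lt_or_ge t δ with hlt | hge
  · obtain ⟨r, hr, hrb⟩ := hball t htpos hlt
    rw [hr]
    have := abs_lt.1 hrb
    have hMt : 0 ≤ |m| * t := mul_nonneg (abs_nonneg m) htnn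
    exact_mod_cast (by linarith : (-(ρ + |m| * t) : ℝ) ≤ r)
  -- t ≥ δ > t1
  have ht1t : t1 < t := by rw [ht1def]; linarith
  have ht01 : t0 < t1 := by rw [ht0def, ht1def]; linarith
  have hnbt : genLogMGF lf μ c t ≠ ⊥ := L_ne_bot lf μ c hc hrc htpos
  rcases eq_or_ne (genLogMGF lf μ c t) ⊤ with htop | hne_top
  · rw [htop]; exact le_top
  set rt := (genLogMGF lf μ c t).toReal with hrtdef
  have hrt : genLogMGF lf μ c t = (rt : EReal) := (EReal.coe_toReal hne_top hnbt).symm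
  rw [hrt]
  -- convexity at t1 between t0 and t
  set aa := (t - t1) / (t - t0) with haadef
  set bb := (t1 - t0) / (t - t0) with hbbdef
  have htt0 : 0 < t - t0 := by rw [ht0def]; linarith
  have haa : 0 < aa := div_pos (by linarith) htt0
  have hbb : 0 < bb := div_pos (by linarith) htt0
  have hpt : ∀ i, Lam μ c i t1 ≤
      ((fun i => (aa : EReal) * Lam μ c i t0) + fun i => (bb : EReal) * Lam μ c i t) i :=
    fun i => Lam_convex μ c hc i ht01 ht1t
  have hls : genLogMGF lf μ c t1
      ≤ Filter.limsup ((fun i => (aa : EReal) * Lam μ c i t0)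
          + fun i => (bb : EReal) * Lam μ c i t) lf := by
    rw [genLogMGF_eq]
    exact Filter.limsup_le_limsup (Filter.Eventually.of_forall hpt)
  have hlim1 : Filter.limsup (fun i => (aa : EReal) * Lam μ c i t0) lf
      = ((aa * r0 : ℝ) : EReal) := by
    rw [limsup_const_mul haa, ← genLogMGF_eq, hr0, ← EReal.coe_mul]
  have hlim2 : Filter.limsup (fun i => (bb : EReal) * Lam μ c i t) lf
      = ((bb * rt : ℝ) : EReal) := by
    rw [limsup_const_mul hbb, ← genLogMGF_eq, hrt, ← EReal.coe_mul]
  have hadd := EReal.limsup_add_le (f := lf)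
      (u := fun i => (aa : EReal) * Lam μ c i t0) (v := fun i => (bb : EReal) * Lam μ c i t)
      (Or.inl (by rw [hlim1]; exact EReal.coe_ne_bot _))
      (Or.inl (by rw [hlim1]; exact EReal.coe_ne_top _))
  rw [hlim1, hlim2, ← EReal.coe_add] at hadd
  have hfin : r1 ≤ aa * r0 + bb * rt := by
    have := hls.trans hadd
    rw [hr1] at this
    exact_mod_cast this
  rw [EReal.coe_le_coe_iff]
  -- real arithmetic
  have h5 : r1 * (t - t0) ≤ (t - t1) * r0 + (t1 - t0) * rt := by
    calc r1 * (t - t0) ≤ (aa * r0 + bb * rt) * (t - t0) :=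
      mul_le_mul_of_nonneg_right hfin htt0.le
    _ = (t - t1) * r0 + (t1 - t0) * rt := by
      rw [haadef, hbbdef]; field_simp
  have h10 : 0 < t1 - t0 := by linarith
  have hm : m * (t1 - t0) = r1 - r0 := by
    rw [hmdef]; exact div_mul_cancel₀ _ (ne_of_gt h10)
  have h6 : m * (t - t1) * (t1 - t0) = (r1 - r0) * (t - t1) := by
    rw [← hm]; ring
  have habs0 := abs_lt.1 hr0b
  have habs1 := abs_lt.1 hr1b
  have h1t : 0 ≤ t - t1 := by linarith
  have h9 : (r1 + m * (t - t1)) * (t1 - t0) ≤ rt * (t1 - t0) := by nlinarith [h5, h6]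
  have h8 : r1 + m * (t - t1) ≤ rt := le_of_mul_le_mul_right h9 h10
  have h11 : -|m| * (t - t1) ≤ m * (t - t1) := mul_le_mul_of_nonneg_right (neg_abs_le m) h1t
  have h12 : |m| * (t - t1) ≤ |m| * t :=
    mul_le_mul_of_nonneg_left (by rw [ht1def]; linarith) (abs_nonneg m)
  linarith

/-- Upper tail bound: for every `b'` the mass above `b'` is exponentially small. -/
lemma lemC (hc : ∀ i, 0 < c i)
    (hrc : Filter.Tendsto (genLogMGF lf μ c) (nhdsWithin 0 (Set.Ioi 0)) (nhds 0))
    (hbot : rightLimE (rightDerivE (genLogMGF lf μ c)) 0 = ⊥) (b' : ℝ) :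
    ∃ ε : ℝ, 0 < ε ∧ ∀ᶠ i in lf, μ i (Set.Ioi b') ≤ ENNReal.ofReal (Real.exp (-ε / c i)) := by
  set N : ℝ := |b'| + 1 with hN
  obtain ⟨t, ht0, ht1, r, hr, hrN⟩ := lemB lf μ c hc hrc hbot N one_pos
  refine ⟨t / 2, by positivity, ?_⟩
  have hev : ∀ᶠ i in lf, Lam μ c i t < ((r + t / 4 : ℝ) : EReal) := by
    have hlt : Filter.limsup (fun i => Lam μ c i t) lf < ((r + t / 4 : ℝ) : EReal) := by
      rw [← genLogMGF_eq, hr]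
      exact_mod_cast (by linarith : r < r + t / 4)
    exact Filter.eventually_lt_of_limsup_lt hlt
  filter_upwards [hev] with i hi
  have hII : II (μ i) (c i) t ≤ ENNReal.ofReal (Real.exp ((r + t / 4) / c i)) := by
    rw [← const_mul_log_le_iff (hc i)]
    exact le_of_lt hi
  have := tail_bound (μ i) (hc i) ht0 (b' := b') hII
  refine this.trans (ENNReal.ofReal_le_ofReal (Real.exp_le_exp.2 ?_))
  refine (div_le_div_iff_of_pos_right (hc i)).2 ?_
  have hb1 : -(t * |b'|) ≤ t * b' := by
    have := mul_le_mul_of_nonneg_left (neg_abs_le b') ht0.le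
    linarith
  rw [hN] at hrN
  nlinarith

end Net5

section Net6

variable {ι : Type*} (lf : Filter ι) [lf.NeBot]
  (μ : ι → Measure ℝ) [∀ i, IsProbabilityMeasure (μ i)]
  (c : ι → ℝ)

lemma LegendreExt_nonneg (hc : ∀ i, 0 < c i)
    (hrc : Filter.Tendsto (genLogMGF lf μ c) (nhdsWithin 0 (Set.Ioi 0)) (nhds 0))
    (X : EReal) : 0 ≤ LegendreExt (genLogMGF lf μ c) X := by
  have h0 : rightLimE (genLogMGF lf μ c) 0 = 0 := hrc.limsup_eq
  rcases eq_or_ne X ⊥ with rfl | hnb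
  · rw [LegendreExt, if_pos rfl, h0, neg_zero]
  rcases eq_or_ne X ⊤ with rfl | hnt
  · rw [LegendreExt, if_neg (by simp), if_pos rfl]; exact le_top
  rw [LegendreExt, if_neg hnb, if_neg hnt, LegendreEE]
  have h1 : ((0:ℝ) : EReal) * X - genLogMGF lf μ c 0 = 0 := by
    rw [L_zero lf μ c hc, EReal.coe_zero, zero_mul, sub_zero]
  calc (0:EReal) = ((0:ℝ) : EReal) * X - genLogMGF lf μ c 0 := h1.symm
  _ ≤ _ := le_iSup (fun t : ℝ => (t : EReal) * X - genLogMGF lf μ c t) 0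

lemma part3 (hc : ∀ i, 0 < c i)
    (hrc : Filter.Tendsto (genLogMGF lf μ c) (nhdsWithin 0 (Set.Ioi 0)) (nhds 0))
    (hbot : rightLimE (rightDerivE (genLogMGF lf μ c)) 0 = ⊥)
    {x : ι → EReal} (hx : Filter.Tendsto x lf (nhds (⊥ : EReal))) :
    Filter.Tendsto (fun i => LegendreExt (genLogMGF lf μ c) (x i)) lf (nhds (0 : EReal)) := by
  have h0 : rightLimE (genLogMGF lf μ c) 0 = 0 := hrc.limsup_eq
  refine tendsto_order.2 ⟨fun a ha => ?_, fun a ha => ?_⟩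
  · exact Filter.Eventually.of_forall fun i =>
      lt_of_lt_of_le ha (LegendreExt_nonneg lf μ c hc hrc (x i))
  · obtain ⟨η, hη0, hηa⟩ : ∃ η : ℝ, 0 < (η : EReal) ∧ (η : EReal) < a := by
      obtain ⟨η, h1, h2⟩ := EReal.lt_iff_exists_real_btwn.1 ha
      exact ⟨η, h1, h2⟩
    have hη0' : 0 < η := by exact_mod_cast hη0
    obtain ⟨M, hM0, hMlow⟩ := lemA lf μ c hc hrc (half_pos hη0')
    have hevx : ∀ᶠ i in lf, x i < (((-M) : ℝ) : EReal) :=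
      hx.eventually_lt_const (EReal.bot_lt_coe _)
    filter_upwards [hevx] with i hi
    rcases eq_or_ne (x i) ⊥ with hb | hnb
    · rw [hb, LegendreExt, if_pos rfl, h0, neg_zero]
      exact lt_of_lt_of_le hη0 hηa.le
    have hnt : x i ≠ ⊤ := ne_top_of_lt hi
    set r := (x i).toReal with hrdef
    have hxr : x i = (r : EReal) := (EReal.coe_toReal hnt hnb).symm
    have hrM : r < -M := by
      rw [hxr] at hi
      exact_mod_cast hi
    rw [hxr, LegendreExt, if_neg (EReal.coe_ne_bot r), if_neg (EReal.coe_ne_top r)]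
    have hsup : LegendreEE (genLogMGF lf μ c) (r : EReal) ≤ ((η / 2 : ℝ) : EReal) := by
      rw [LegendreEE]
      refine iSup_le fun t => ?_
      rcases lt_trichotomy t 0 with htneg | rfl | htpos
      · rw [L_neg_top lf μ c hc hrc hbot htneg, EReal.sub_top]
        exact bot_le
      · rw [L_zero lf μ c hc, EReal.coe_zero, zero_mul, sub_zero]
        exact_mod_cast (by linarith : (0:ℝ) ≤ η / 2)
      · have hlow := hMlow t htpos.le
        calc (t : EReal) * (r : EReal) - genLogMGF lf μ c t
            ≤ ((t * r : ℝ) : EReal) - ((-(η / 2 + M * t) : ℝ) : EReal) := by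
              rw [← EReal.coe_mul]
              exact EReal.sub_le_sub (le_refl _) hlow
        _ = ((t * r + (η / 2 + M * t) : ℝ) : EReal) := by push_cast; rw [sub_eq_add_neg, neg_neg]
        _ ≤ ((η / 2 : ℝ) : EReal) := by
              have : t * r + M * t ≤ 0 := by nlinarith
              exact_mod_cast (by linarith : t * r + (η / 2 + M * t) ≤ η / 2)
    refine lt_of_le_of_lt hsup (lt_of_lt_of_le ?_ hηa.le)
    exact_mod_cast (by linarith : η / 2 < η)

end Net6

section Net7

variable {ι : Type*} (lf : Filter ι) [lf.NeBot]
  (μ : ι → Measure ℝ) [∀ i, IsProbabilityMeasure (μ i)]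
  (c : ι → ℝ)

set_option maxHeartbeats 2000000 in
lemma mainLower (hc : ∀ i, 0 < c i) (hc0 : Filter.Tendsto c lf (nhds (0 : ℝ)))
    (hrc : Filter.Tendsto (genLogMGF lf μ c) (nhdsWithin 0 (Set.Ioi 0)) (nhds 0))
    (hbot : rightLimE (rightDerivE (genLogMGF lf μ c)) 0 = ⊥)
    {x y : ι → EReal} (hx : Filter.Tendsto x lf (nhds (⊥ : EReal)))
    (hy : ⊥ < Filter.liminf y lf) :
    (0 : EReal) ≤ Filter.limsup (fun i => elog (c i) (muIooE (μ i) (x i) (y i))) lf := by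
  have claim : ∀ ρ : ℝ, 0 < ρ →
      ((-ρ : ℝ) : EReal) ≤ Filter.limsup (fun i => elog (c i) (muIooE (μ i) (x i) (y i))) lf := by
    intro ρ hρ
    -- step 1 : a real lower bound on y
    obtain ⟨b0, _, hb0lim⟩ := EReal.lt_iff_exists_real_btwn.1 hy
    have hb0y : ∀ᶠ i in lf, (b0 : EReal) < y i := Filter.eventually_lt_of_lt_liminf hb0lim
    set b : ℝ := min b0 0 with hbdef
    have hb0 : b ≤ 0 := min_le_right _ _
    have hby : ∀ᶠ i in lf, (b : EReal) < y i := by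
      filter_upwards [hb0y] with i hi
      exact lt_of_le_of_lt (by exact_mod_cast min_le_left b0 0) hi
    -- step 2 : upper tail
    obtain ⟨ε0, hε0, hevC0⟩ := lemC lf μ c hc hrc hbot b
    set ε : ℝ := min ε0 ρ with hεdef
    have hε : 0 < ε := lt_min hε0 hρ
    have hevC : ∀ᶠ i in lf, μ i (Set.Ioi b) ≤ ENNReal.ofReal (Real.exp (-ε / c i)) := by
      filter_upwards [hevC0] with i hi
      refine hi.trans (ENNReal.ofReal_le_ofReal (Real.exp_le_exp.2 ?_))
      have : -ε0 ≤ -ε := by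
        have := min_le_left ε0 ρ
        simp only [hεdef]; linarith
      exact (div_le_div_iff_of_pos_right (hc i)).2 this
    -- step 3 : parameters
    set κ : ℝ := min ρ ε / 8 with hκdef
    have hκ0 : 0 < κ := by positivity
    have hκρ : κ ≤ ρ / 8 := by
      rw [hκdef]; have := min_le_left ρ ε; linarith
    have hκε : κ ≤ ε / 8 := by
      rw [hκdef]; have := min_le_right ρ ε; linarith
    obtain ⟨δ, hδ, hball⟩ := tendsto_ball hrc hκ0
    set t'' : ℝ := δ / 2 with ht''def
    have ht''0 : 0 < t'' := by positivity
    obtain ⟨r'', hr'', hr''b⟩ := hball t'' ht''0 (by rw [ht''def]; linarith)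
    set V : ℝ := 8 * ρ / t'' + 1 with hVdef
    have hV1 : 1 ≤ V := by
      rw [hVdef]; have : 0 < 8 * ρ / t'' := by positivity
      linarith
    have hV0 : 0 < V := lt_of_lt_of_le one_pos hV1
    have hVhalf : 4 * ρ ≤ t'' / 2 * V := by
      rw [hVdef]
      have h1 : t'' / 2 * (8 * ρ / t'' + 1) = 4 * ρ + t'' / 2 := by field_simp; ring
      rw [h1]; linarith
    set tm : ℝ := min (min δ t'') (ε / (8 * V)) with htmdef
    have htm0 : 0 < tm := lt_min (lt_min hδ ht''0) (by positivity)
    set t : ℝ := tm / 2 with htdef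
    have ht0 : 0 < t := by positivity
    have htδ : t < δ := by
      have h1 : tm ≤ δ := (min_le_left _ _).trans (min_le_left _ _)
      rw [htdef]; linarith
    have htt'' : t ≤ t'' / 2 := by
      have h1 : tm ≤ t'' := (min_le_left _ _).trans (min_le_right _ _)
      rw [htdef]; linarith
    have htV : t * V ≤ ε / 8 := by
      have h1 : tm ≤ ε / (8 * V) := min_le_right _ _
      have h2 : t ≤ ε / (8 * V) := by rw [htdef]; linarith
      calc t * V ≤ ε / (8 * V) * V := mul_le_mul_of_nonneg_right h2 hV0.le
      _ = ε / 8 := by field_simp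
    obtain ⟨r, hr, hrb⟩ := hball t ht0 htδ
    set R : ℝ := (2 * ρ + 1) / t + |b| + 1 with hRdef
    have hRb : -R ≤ b := by
      have h1 : 0 < (2 * ρ + 1) / t := by positivity
      have h2 := neg_abs_le b
      rw [hRdef]; linarith
    have htR : 2 * ρ + 1 ≤ t * R := by
      rw [hRdef]
      have h1 : t * ((2 * ρ + 1) / t + |b| + 1) = (2 * ρ + 1) + t * (|b| + 1) := by
        field_simp; ring
      have h2 : 0 ≤ t * (|b| + 1) := by positivity
      rw [h1]; linarith
    have hr1 : -κ < r := (abs_lt.1 hrb).1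
    have hr2 : r < κ := (abs_lt.1 hrb).2
    have hr''1 : -κ < r'' := (abs_lt.1 hr''b).1
    have hr''2 : r'' < κ := (abs_lt.1 hr''b).2
    clear_value b ε κ t'' V tm t R
    -- events
    have e1 : ∃ᶠ i in lf, ((r - κ : ℝ) : EReal) < Lam μ c i t := by
      have hlt : ((r - κ : ℝ) : EReal) < Filter.limsup (fun i => Lam μ c i t) lf := by
        rw [← genLogMGF_eq, hr]
        exact_mod_cast sub_lt_self r hκ0
      exact Filter.frequently_lt_of_lt_limsup (by isBoundedDefault) hlt
    have e2 : ∀ᶠ i in lf, Lam μ c i t'' < ((r'' + κ : ℝ) : EReal) := by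
      have hlt : Filter.limsup (fun i => Lam μ c i t'') lf < ((r'' + κ : ℝ) : EReal) := by
        rw [← genLogMGF_eq, hr'']
        exact_mod_cast lt_add_of_pos_right r'' hκ0
      exact Filter.eventually_lt_of_limsup_lt hlt
    have e4 : ∀ᶠ i in lf, x i < (((-R) : ℝ) : EReal) :=
      hx.eventually_lt_const (EReal.bot_lt_coe _)
    have e6 : ∀ᶠ i in lf, Real.exp (-κ / c i) ≤ 1 / 6 := by
      have hlog : (0:ℝ) < Real.log 6 := Real.log_pos (by norm_num)
      have hev : ∀ᶠ i in lf, c i < κ / Real.log 6 :=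
        hc0.eventually_lt_const (by positivity)
      filter_upwards [hev] with i hi
      have hci := hc i
      have h1 : Real.log 6 ≤ κ / c i := by
        rw [le_div_iff₀ hci]
        calc Real.log 6 * c i ≤ Real.log 6 * (κ / Real.log 6) :=
          mul_le_mul_of_nonneg_left hi.le hlog.le
        _ = κ := by field_simp
      have h2 : -κ / c i ≤ -Real.log 6 := by
        rw [neg_div]; linarith
      calc Real.exp (-κ / c i) ≤ Real.exp (-Real.log 6) := Real.exp_le_exp.2 h2
      _ = 1 / 6 := by
        rw [Real.exp_neg, Real.exp_log (by norm_num : (0:ℝ) < 6)]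
        norm_num
    -- combine
    have freq : ∃ᶠ i in lf,
        ((-ρ : ℝ) : EReal) ≤ elog (c i) (muIooE (μ i) (x i) (y i)) := by
      refine (e1.and_eventually (e2.and (hevC.and (e4.and (hby.and e6))))).mono ?_
      rintro i ⟨h1, h2, h3, h4, h5, h6⟩
      have hci := hc i
      -- abbreviations
      set ci := c i with hcidef
      have hIIge : ENNReal.ofReal (Real.exp ((r - κ) / ci)) ≤ II (μ i) ci t :=
        (le_const_mul_log_iff hci).1 h1.le
      have hII'' : II (μ i) ci t'' ≤ ENNReal.ofReal (Real.exp ((r'' + κ) / ci)) :=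
        (const_mul_log_le_iff hci).1 h2.le
      have hbV : b ≤ V := hb0.trans (by linarith)
      have hsplit := II_split (μ i) ci t (-R) b V hRb hbV
      -- piece bounds
      have hP1 : (∫⁻ z in Set.Iio (-R), mgfInt ci t z ∂(μ i))
          ≤ ENNReal.ofReal (Real.exp ((-(t * R)) / ci)) := by
        refine (setLint_le (μ i) hci t (S := Set.Iio (-R)) (w := -(t * R)) ?_).trans ?_
        · intro z hz
          have := mul_le_mul_of_nonneg_left (le_of_lt hz) ht0.le
          linarith
        · calc ENNReal.ofReal (Real.exp ((-(t * R)) / ci)) * (μ i) (Set.Iio (-R))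
              ≤ ENNReal.ofReal (Real.exp ((-(t * R)) / ci)) * 1 :=
            mul_le_mul_right prob_le_one _
          _ = _ := mul_one _
      have hP2 : (∫⁻ z in Set.Icc (-R) b, mgfInt ci t z ∂(μ i)) ≤ (μ i) (Set.Icc (-R) b) := by
        refine (setLint_le (μ i) hci t (S := Set.Icc (-R) b) (w := 0) ?_).trans ?_
        · intro z hz
          have h7 : t * z ≤ t * b := mul_le_mul_of_nonneg_left hz.2 ht0.le
          have h8 : t * b ≤ 0 := mul_nonpos_of_nonneg_of_nonpos ht0.le hb0
          linarith
        · simp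
      have hP3 : (∫⁻ z in Set.Ioc b V, mgfInt ci t z ∂(μ i))
          ≤ ENNReal.ofReal (Real.exp ((t * V - ε) / ci)) := by
        refine (setLint_le (μ i) hci t (S := Set.Ioc b V) (w := t * V) ?_).trans ?_
        · intro z hz
          exact mul_le_mul_of_nonneg_left hz.2 ht0.le
        · calc ENNReal.ofReal (Real.exp (t * V / ci)) * (μ i) (Set.Ioc b V)
              ≤ ENNReal.ofReal (Real.exp (t * V / ci)) * (μ i) (Set.Ioi b) :=
            mul_le_mul_right (measure_mono Set.Ioc_subset_Ioi_self) _
          _ ≤ ENNReal.ofReal (Real.exp (t * V / ci)) * ENNReal.ofReal (Real.exp (-ε / ci)) :=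
            mul_le_mul_right h3 _
          _ = ENNReal.ofReal (Real.exp ((t * V - ε) / ci)) := by
            rw [← ENNReal.ofReal_mul (Real.exp_pos _).le, ← Real.exp_add, ← add_div]
            ring_nf
      have hP4 : (∫⁻ z in Set.Ioi V, mgfInt ci t z ∂(μ i))
          ≤ ENNReal.ofReal (Real.exp (((t - t'') * V + (r'' + κ)) / ci)) := by
        have hptw : ∀ z ∈ Set.Ioi V, mgfInt ci t z
            ≤ ENNReal.ofReal (Real.exp ((t - t'') * V / ci)) * mgfInt ci t'' z := by
          intro z hz
          rw [mgfInt, mgfInt, ← ENNReal.ofReal_mul (Real.exp_pos _).le, ← Real.exp_add,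
            ← add_div]
          refine ENNReal.ofReal_le_ofReal (Real.exp_le_exp.2 ((div_le_div_iff_of_pos_right hci).2 ?_))
          have h7 : (t - t'') * z ≤ (t - t'') * V :=
            mul_le_mul_of_nonpos_left (le_of_lt hz) (by linarith)
          linarith
        calc (∫⁻ z in Set.Ioi V, mgfInt ci t z ∂(μ i))
            ≤ ∫⁻ z in Set.Ioi V,
              ENNReal.ofReal (Real.exp ((t - t'') * V / ci)) * mgfInt ci t'' z ∂(μ i) :=
          setLIntegral_mono (measurable_const.mul (mgfInt_meas ci t'')) hptw
        _ = ENNReal.ofReal (Real.exp ((t - t'') * V / ci))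
              * ∫⁻ z in Set.Ioi V, mgfInt ci t'' z ∂(μ i) :=
          lintegral_const_mul _ (mgfInt_meas ci t'')
        _ ≤ ENNReal.ofReal (Real.exp ((t - t'') * V / ci)) * II (μ i) ci t'' :=
          mul_le_mul_right (setLIntegral_le_lintegral _ _) _
        _ ≤ ENNReal.ofReal (Real.exp ((t - t'') * V / ci))
              * ENNReal.ofReal (Real.exp ((r'' + κ) / ci)) := mul_le_mul_right hII'' _
        _ = ENNReal.ofReal (Real.exp (((t - t'') * V + (r'' + κ)) / ci)) := by
          rw [← ENNReal.ofReal_mul (Real.exp_pos _).le, ← Real.exp_add, ← add_div]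
      -- exponent comparisons
      set small := ENNReal.ofReal (Real.exp ((r - 2 * κ) / ci)) with hsmalldef
      have hmono : ∀ w w' : ℝ, w ≤ w' →
          ENNReal.ofReal (Real.exp (w / ci)) ≤ ENNReal.ofReal (Real.exp (w' / ci)) :=
        fun w w' hww' => ENNReal.ofReal_le_ofReal
          (Real.exp_le_exp.2 ((div_le_div_iff_of_pos_right hci).2 hww'))
      have hc1 : -(t * R) ≤ r - 2 * κ := by linarith
      have hc2 : t * V - ε ≤ r - 2 * κ := by linarith [htV, hκε, hr1, hε]
      have hc3 : (t - t'') * V + (r'' + κ) ≤ r - 2 * κ := by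
        have h7 : (t - t'') * V ≤ -(t'' / 2) * V := by
          refine mul_le_mul_of_nonneg_right ?_ hV0.le
          linarith
        have h8 : -(t'' / 2) * V = -(t'' / 2 * V) := by ring
        have h9 : (t - t'') * V ≤ -(4 * ρ) := by
          rw [h8] at h7; linarith [hVhalf]
        linarith [hr1, hr''2, hκρ]
      -- assemble
      have hup : ENNReal.ofReal (Real.exp ((r - κ) / ci))
          ≤ (μ i) (Set.Icc (-R) b) + (small + small + small) := by
        refine hIIge.trans ?_
        rw [hsplit]
        have := add_le_add (add_le_add (add_le_add
          (hP1.trans (hmono _ _ hc1)) hP2) (hP3.trans (hmono _ _ hc2)))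
          (hP4.trans (hmono _ _ hc3))
        refine this.trans (le_of_eq ?_)
        rw [hsmalldef]
        ring
      have hS_ne : (small + small + small) ≠ ⊤ := by
        rw [hsmalldef]
        exact ENNReal.add_ne_top.2 ⟨ENNReal.add_ne_top.2
          ⟨ENNReal.ofReal_ne_top, ENNReal.ofReal_ne_top⟩, ENNReal.ofReal_ne_top⟩
      have hfour : small + (small + small + small)
          ≤ ENNReal.ofReal (Real.exp ((r - κ) / ci)) := by
        have hsum_eq : small + (small + small + small)
            = ENNReal.ofReal (Real.exp ((r - 2 * κ) / ci) * 4) := by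
          rw [hsmalldef]
          rw [← ENNReal.ofReal_add (by positivity) (by positivity)]
          rw [← ENNReal.ofReal_add (by positivity) (by positivity)]
          rw [← ENNReal.ofReal_add (by positivity) (by positivity)]
          congr 1
          ring
        rw [hsum_eq]
        refine ENNReal.ofReal_le_ofReal ?_
        have hsplit_exp : Real.exp ((r - 2 * κ) / ci)
            = Real.exp ((r - κ) / ci) * Real.exp (-κ / ci) := by
          rw [← Real.exp_add, ← add_div]
          ring_nf
        have hexp_pos : 0 < Real.exp ((r - κ) / ci) := Real.exp_pos _
        rw [hsplit_exp]
        have h10 : Real.exp ((r - κ) / ci) * Real.exp (-κ / ci)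
            ≤ Real.exp ((r - κ) / ci) * (1 / 6) := mul_le_mul_of_nonneg_left h6 hexp_pos.le
        have h11 : Real.exp ((r - κ) / ci) * Real.exp (-κ / ci) * 4
            ≤ Real.exp ((r - κ) / ci) * (1 / 6) * 4 :=
          mul_le_mul_of_nonneg_right h10 (by norm_num)
        linarith
      have hsmall_le : small ≤ (μ i) (Set.Icc (-R) b) := by
        have := (hfour.trans hup)
        exact (ENNReal.add_le_add_iff_right hS_ne).1 this
      -- inclusion into the interval
      have hsub : Set.Icc (-R) b ⊆ {z : ℝ | x i < (z : EReal) ∧ (z : EReal) < y i} := by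
        intro z hz
        constructor
        · exact lt_of_lt_of_le h4 (by exact_mod_cast hz.1)
        · exact lt_of_le_of_lt (by exact_mod_cast hz.2) h5
      have hmeas_le : small ≤ muIooE (μ i) (x i) (y i) :=
        hsmall_le.trans (measure_mono hsub)
      -- conclude
      have hlog : ((r - 2 * κ : ℝ) : EReal) ≤ elog ci (muIooE (μ i) (x i) (y i)) :=
        (le_const_mul_log_iff hci).2 hmeas_le
      refine le_trans ?_ hlog
      exact_mod_cast (by linarith : (-ρ : ℝ) ≤ r - 2 * κ)
    exact Filter.le_limsup_of_frequently_le freq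
  by_contra hcon
  push_neg at hcon
  obtain ⟨w, hw1, hw2⟩ := EReal.lt_iff_exists_real_btwn.1 hcon
  have hwneg : 0 < -w := by
    have : (w : EReal) < ((0:ℝ) : EReal) := by exact_mod_cast hw2
    have : w < 0 := by exact_mod_cast this
    linarith
  have := claim (-w) hwneg
  rw [neg_neg] at this
  exact absurd (lt_of_le_of_lt this hw1) (lt_irrefl _)

end Net7

lemma elog_nonpos {cc : ℝ} (hc : 0 ≤ cc) {m : ENNReal} (hm : m ≤ 1) : elog cc m ≤ 0 := by
  have h := ENNReal.log_monotone hm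
  rw [ENNReal.log_one] at h
  have h2 := mul_le_mul_of_nonneg_left h (show (0:EReal) ≤ (cc : EReal) by exact_mod_cast hc)
  rw [mul_zero] at h2
  exact h2

end LDPAux

end

theorem statement1
    {ι : Type*} (lf : Filter ι) [lf.NeBot]
    (μ : ι → Measure ℝ) [∀ i, IsProbabilityMeasure (μ i)]
    (c : ι → ℝ) (hc : ∀ i, 0 < c i) (hc0 : Filter.Tendsto c lf (nhds (0 : ℝ)))
    (L : ℝ → EReal) (hL : L = genLogMGF lf μ c)
    (hbot : rightLimE (rightDerivE L) 0 = ⊥)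
    (hrc : Filter.Tendsto L (nhdsWithin 0 (Set.Ioi 0)) (nhds (0 : EReal)))
    (x y : ι → EReal)
    (hx : Filter.Tendsto x lf (nhds (⊥ : EReal)))
    (hy : ⊥ < Filter.liminf y lf) :
    Filter.limsup (fun i => elog (c i) (muIccE (μ i) (x i) (y i))) lf = 0 ∧
    Filter.limsup (fun i => elog (c i) (muIooE (μ i) (x i) (y i))) lf = 0 ∧
    Filter.Tendsto (fun i => LegendreExt L (x i)) lf (nhds (0 : EReal)) := by
  subst hL
  have hIooIcc : ∀ i, elog (c i) (muIooE (μ i) (x i) (y i))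
      ≤ elog (c i) (muIccE (μ i) (x i) (y i)) := fun i =>
    LDPAux.elog_mono (hc i).le (measure_mono (fun z hz => ⟨hz.1.le, hz.2.le⟩))
  have hupIcc : Filter.limsup (fun i => elog (c i) (muIccE (μ i) (x i) (y i))) lf ≤ 0 := by
    refine Filter.limsup_le_of_le (by isBoundedDefault) (Filter.Eventually.of_forall fun i => ?_)
    exact LDPAux.elog_nonpos (hc i).le prob_le_one
  have hlow := LDPAux.mainLower lf μ c hc hc0 hrc hbot hx hy
  have hIoo_le_Icc : Filter.limsup (fun i => elog (c i) (muIooE (μ i) (x i) (y i))) lf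
      ≤ Filter.limsup (fun i => elog (c i) (muIccE (μ i) (x i) (y i))) lf :=
    Filter.limsup_le_limsup (Filter.Eventually.of_forall hIooIcc)
  exact ⟨le_antisymm hupIcc (le_trans hlow hIoo_le_Icc),
    le_antisymm (hIoo_le_Icc.trans hupIcc) hlow,
    LDPAux.part3 lf μ c hc hrc hbot hx⟩
end

section
/- Let λ = 0 and ε > 0. Assume L̄ is differentiable on (0, ε), sup{L̄'(t) : t ∈ (0, ε)} is not attained, L̄'_r(0⁺) = −∞, and L̄ is right continuous at zero. Then for every net (x_α) in [-∞,+∞] converging to −∞ and every net (y_α) in [-∞,+∞] with liminf_α y_α > −∞, one has limsup_α c_α·log μ_α([x_α, y_α]) = limsup_α c_α·log μ_α((x_α, y_α)) = 0 = −lim_α L̄*(x_α). -/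
open Filter MeasureTheory Set Topology

-- ===================== auxiliary lemmas =====================

section Aux

open Filter MeasureTheory Set Topology

noncomputable def ERealMulIso (r : ℝ) (hr : 0 < r) : EReal ≃o EReal where
  toFun z := (r : EReal) * z
  invFun z := ((r⁻¹ : ℝ) : EReal) * z
  left_inv z := by
    show ((r⁻¹:ℝ):EReal) * ((r:EReal) * z) = z
    rw [← mul_assoc, ← EReal.coe_mul, inv_mul_cancel₀ hr.ne', EReal.coe_one, one_mul]
  right_inv z := by
    show ((r:ℝ):EReal) * (((r⁻¹:ℝ):EReal) * z) = z
    rw [← mul_assoc, ← EReal.coe_mul, mul_inv_cancel₀ hr.ne', EReal.coe_one, one_mul]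
  map_rel_iff' := by
    intro a b
    show (r : EReal) * a ≤ (r:EReal) * b ↔ a ≤ b
    constructor
    · intro h
      have h2 := mul_le_mul_of_nonneg_left h (EReal.coe_nonneg.2 (inv_pos.2 hr).le)
      rwa [← mul_assoc, ← mul_assoc, ← EReal.coe_mul, inv_mul_cancel₀ hr.ne', EReal.coe_one,
        one_mul, one_mul] at h2
    · intro h
      exact mul_le_mul_of_nonneg_left h (EReal.coe_nonneg.2 hr.le)

lemma limsup_coe_mul' {ι : Type*} {f : Filter ι} (r : ℝ) (hr : 0 < r) (u : ι → EReal) :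
    Filter.limsup (fun i => (r : EReal) * u i) f = (r : EReal) * Filter.limsup u f :=
  ((ERealMulIso r hr).limsup_apply (u := u)).symm

lemma limsup_max_le' {ι : Type*} {f : Filter ι} (u v : ι → EReal) :
    Filter.limsup (fun i => max (u i) (v i)) f ≤
      max (Filter.limsup u f) (Filter.limsup v f) := by
  refine (Filter.limsup_le_iff (by isBoundedDefault) (by isBoundedDefault)).2 fun b hb => ?_
  filter_upwards [Filter.eventually_lt_of_limsup_lt (lt_of_le_of_lt (le_max_left _ _) hb),
    Filter.eventually_lt_of_limsup_lt (lt_of_le_of_lt (le_max_right _ _) hb)] with i h1 h2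
  exact max_lt h1 h2

lemma limsup_add_le' {ι : Type*} {f : Filter ι} (u v : ι → EReal)
    (h : Filter.limsup u f ≠ ⊥ ∨ Filter.limsup v f ≠ ⊤)
    (h' : Filter.limsup u f ≠ ⊤ ∨ Filter.limsup v f ≠ ⊥) :
    Filter.limsup (fun i => u i + v i) f ≤ Filter.limsup u f + Filter.limsup v f :=
  EReal.limsup_add_le h h'

lemma emul_add_le (c : ℝ) (hc : 0 ≤ c) (A B : EReal) :
    (c : EReal) * (A + B) ≤ (c : EReal) * A + (c : EReal) * B := by
  rcases eq_or_lt_of_le hc with rfl | hc'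
  · simp
  have hcp : (0:EReal) < (c:EReal) := by exact_mod_cast hc'
  induction A using EReal.rec with
  | bot => simp [EReal.mul_bot_of_pos hcp]
  | top =>
    induction B using EReal.rec with
    | bot => simp [EReal.mul_bot_of_pos hcp, EReal.mul_top_of_pos hcp]
    | top => simp [EReal.mul_top_of_pos hcp]
    | coe b =>
      rw [EReal.top_add_coe, EReal.mul_top_of_pos hcp, ← EReal.coe_mul, EReal.top_add_coe]
  | coe a =>
    induction B using EReal.rec with
    | bot =>
      rw [EReal.add_bot, EReal.mul_bot_of_pos hcp, ← EReal.coe_mul, EReal.add_bot]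
    | top =>
      rw [EReal.coe_add_top, EReal.mul_top_of_pos hcp, ← EReal.coe_mul, EReal.coe_add_top]
    | coe b =>
      rw [← EReal.coe_add, ← EReal.coe_mul, ← EReal.coe_mul, ← EReal.coe_mul, ← EReal.coe_add,
        mul_add]

lemma emul_coe_add (c : ℝ) (hc : 0 < c) (x : ℝ) (y : EReal) :
    (c : EReal) * ((x : EReal) + y) = ((c * x : ℝ) : EReal) + (c : EReal) * y := by
  have hcp : (0:EReal) < (c:EReal) := by exact_mod_cast hc
  induction y using EReal.rec with
  | bot => rw [EReal.add_bot, EReal.mul_bot_of_pos hcp, EReal.add_bot]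
  | top => rw [EReal.coe_add_top, EReal.mul_top_of_pos hcp, EReal.coe_add_top]
  | coe b => rw [← EReal.coe_add, ← EReal.coe_mul, ← EReal.coe_mul, ← EReal.coe_add, mul_add]

lemma emul_max (c : ℝ) (hc : 0 ≤ c) (A B : EReal) :
    (c : EReal) * max A B = max ((c : EReal) * A) ((c : EReal) * B) := by
  rcases max_cases A B with ⟨h1, h2⟩ | ⟨h1, h2⟩
  · rw [h1]
    exact (max_eq_left (mul_le_mul_of_nonneg_left h2 (EReal.coe_nonneg.2 hc))).symm
  · rw [h1]
    exact (max_eq_right (mul_le_mul_of_nonneg_left h2.le (EReal.coe_nonneg.2 hc))).symm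

lemma elog_mono (c : ℝ) (hc : 0 ≤ c) {m m' : ENNReal} (h : m ≤ m') : elog c m ≤ elog c m' :=
  mul_le_mul_of_nonneg_left (ENNReal.log_monotone h) (EReal.coe_nonneg.2 hc)

lemma elog_le_zero (c : ℝ) (hc : 0 ≤ c) {m : ENNReal} (h : m ≤ 1) : elog c m ≤ 0 := by
  have := mul_le_mul_of_nonneg_left (ENNReal.log_monotone h) (EReal.coe_nonneg.2 hc)
  simpa [elog] using this

lemma ereal_ne_bot_top {x : EReal} (h1 : x ≠ ⊥) (h2 : x ≠ ⊤) : ∃ r : ℝ, x = (r : EReal) := by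
  induction x using EReal.rec with
  | bot => exact absurd rfl h1
  | top => exact absurd rfl h2
  | coe r => exact ⟨r, rfl⟩

end Aux


section Main

open Filter MeasureTheory Set Topology

variable {ι : Type*} (lf : Filter ι) (μ : ι → Measure ℝ) (c : ι → ℝ)

lemma genLogMGF_zero [lf.NeBot] [∀ i, IsProbabilityMeasure (μ i)] :
    genLogMGF lf μ c 0 = 0 := by
  have : ∀ i, elog (c i)
      (∫⁻ x : ℝ, ENNReal.ofReal (Real.exp (0 * x / c i)) ∂ (μ i)) = 0 := by
    intro i
    simp [elog, Real.exp_zero]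
  simp only [genLogMGF, this]
  exact limsup_const 0

lemma genLogMGF_convex [∀ i, IsProbabilityMeasure (μ i)] (hc : ∀ i, 0 < c i)
    {u v w : ℝ} (huv : u < v) (hvw : v < w)
    (hfin : (genLogMGF lf μ c u ≠ ⊥ ∧ genLogMGF lf μ c u ≠ ⊤) ∨
      (genLogMGF lf μ c w ≠ ⊥ ∧ genLogMGF lf μ c w ≠ ⊤)) :
    genLogMGF lf μ c v ≤ (((w-v)/(w-u) : ℝ) : EReal) * genLogMGF lf μ c u +
      (((v-u)/(w-u) : ℝ) : EReal) * genLogMGF lf μ c w := by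
  set tb : ℝ := (w-v)/(w-u) with htb
  set th : ℝ := (v-u)/(w-u) with hth
  have hwu : (0:ℝ) < w - u := by linarith
  have htbp : 0 < tb := div_pos (by linarith) hwu
  have hthp : 0 < th := div_pos (by linarith) hwu
  have hsum : tb + th = 1 := by rw [htb, hth]; field_simp; ring
  -- the moment integrals
  set M : ℝ → ι → ENNReal :=
    fun t i => ∫⁻ x : ℝ, ENNReal.ofReal (Real.exp (t * x / c i)) ∂ (μ i) with hM
  have holder : ∀ i, M v i ≤ (M u i) ^ tb * (M w i) ^ th := by
    intro i
    set C := c i with hC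
    have hCp : 0 < C := hc i
    have hpq : (tb⁻¹).HolderConjugate th⁻¹ := Real.HolderConjugate.inv_inv htbp hthp hsum
    have hmu : Measurable fun x : ℝ => ENNReal.ofReal (Real.exp (u * x / C)) :=
      (((measurable_id.const_mul u).div_const C).exp).ennreal_ofReal
    have hmw : Measurable fun x : ℝ => ENNReal.ofReal (Real.exp (w * x / C)) :=
      (((measurable_id.const_mul w).div_const C).exp).ennreal_ofReal
    have key := ENNReal.lintegral_mul_le_Lp_mul_Lq (μ i) hpq
      ((ENNReal.continuous_rpow_const.measurable.comp hmu).aemeasurable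
        : AEMeasurable (fun x => (ENNReal.ofReal (Real.exp (u * x / C))) ^ tb) (μ i))
      ((ENNReal.continuous_rpow_const.measurable.comp hmw).aemeasurable
        : AEMeasurable (fun x => (ENNReal.ofReal (Real.exp (w * x / C))) ^ th) (μ i))
    have hcomb : tb * u + th * w = v := by rw [htb, hth]; field_simp; ring
    have hpt : ∀ x : ℝ, ENNReal.ofReal (Real.exp (v * x / C)) =
        (ENNReal.ofReal (Real.exp (u * x / C))) ^ tb *
          (ENNReal.ofReal (Real.exp (w * x / C))) ^ th := by
      intro x
      rw [ENNReal.ofReal_rpow_of_pos (Real.exp_pos _), ENNReal.ofReal_rpow_of_pos (Real.exp_pos _),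
        ← Real.exp_mul, ← Real.exp_mul, ← ENNReal.ofReal_mul (Real.exp_nonneg _), ← Real.exp_add]
      congr 1
      have : u * x / C * tb + w * x / C * th = (tb * u + th * w) * x / C := by ring
      rw [this, hcomb]
    have h1 : ∀ x:ℝ, ((ENNReal.ofReal (Real.exp (u * x / C))) ^ tb) ^ (tb⁻¹) =
        ENNReal.ofReal (Real.exp (u * x / C)) := by
      intro x
      rw [← ENNReal.rpow_mul, mul_inv_cancel₀ htbp.ne', ENNReal.rpow_one]
    have h2 : ∀ x:ℝ, ((ENNReal.ofReal (Real.exp (w * x / C))) ^ th) ^ (th⁻¹) =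
        ENNReal.ofReal (Real.exp (w * x / C)) := by
      intro x
      rw [← ENNReal.rpow_mul, mul_inv_cancel₀ hthp.ne', ENNReal.rpow_one]
    simp only [Pi.mul_apply, Function.comp_apply, h1, h2, one_div, inv_inv] at key
    calc M v i = ∫⁻ x : ℝ, (ENNReal.ofReal (Real.exp (u * x / C))) ^ tb *
          (ENNReal.ofReal (Real.exp (w * x / C))) ^ th ∂(μ i) := by
          exact lintegral_congr fun x => hpt x
      _ ≤ _ := key
  -- pointwise bound on `elog`
  have hpoint : ∀ i, elog (c i) (M v i) ≤
      (tb : EReal) * elog (c i) (M u i) + (th : EReal) * elog (c i) (M w i) := by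
    intro i
    calc elog (c i) (M v i) ≤ elog (c i) ((M u i) ^ tb * (M w i) ^ th) :=
          elog_mono _ (hc i).le (holder i)
      _ = (c i : EReal) * ((tb : EReal) * ENNReal.log (M u i) +
            (th : EReal) * ENNReal.log (M w i)) := by
          rw [elog, ENNReal.log_mul_add, ENNReal.log_rpow, ENNReal.log_rpow]
      _ ≤ (c i : EReal) * ((tb : EReal) * ENNReal.log (M u i)) +
            (c i : EReal) * ((th : EReal) * ENNReal.log (M w i)) :=
          emul_add_le _ (hc i).le _ _
      _ = (tb : EReal) * elog (c i) (M u i) + (th : EReal) * elog (c i) (M w i) := by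
          simp only [elog]
          rw [mul_left_comm, mul_left_comm ((c i : ℝ) : EReal) (th : EReal)]
  -- pass to limsup
  have hLdef : ∀ t : ℝ, genLogMGF lf μ c t = Filter.limsup (fun i => elog (c i) (M t i)) lf := by
    intro t; rfl
  rw [hLdef, hLdef, hLdef]
  calc Filter.limsup (fun i => elog (c i) (M v i)) lf
      ≤ Filter.limsup (fun i => (tb : EReal) * elog (c i) (M u i) +
          (th : EReal) * elog (c i) (M w i)) lf :=
        Filter.limsup_le_limsup (Filter.Eventually.of_forall hpoint)
    _ ≤ Filter.limsup (fun i => (tb : EReal) * elog (c i) (M u i)) lf +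
          Filter.limsup (fun i => (th : EReal) * elog (c i) (M w i)) lf := by
        apply limsup_add_le'
        · rw [limsup_coe_mul' tb htbp, limsup_coe_mul' th hthp]
          rcases hfin with ⟨h1, h2⟩ | ⟨h1, h2⟩
          · obtain ⟨r, hr⟩ := ereal_ne_bot_top h1 h2
            left; rw [hLdef] at hr; rw [hr, ← EReal.coe_mul]; exact EReal.coe_ne_bot _
          · obtain ⟨r, hr⟩ := ereal_ne_bot_top h1 h2
            right; rw [hLdef] at hr; rw [hr, ← EReal.coe_mul]; exact EReal.coe_ne_top _
        · rw [limsup_coe_mul' tb htbp, limsup_coe_mul' th hthp]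
          rcases hfin with ⟨h1, h2⟩ | ⟨h1, h2⟩
          · obtain ⟨r, hr⟩ := ereal_ne_bot_top h1 h2
            left; rw [hLdef] at hr; rw [hr, ← EReal.coe_mul]; exact EReal.coe_ne_top _
          · obtain ⟨r, hr⟩ := ereal_ne_bot_top h1 h2
            right; rw [hLdef] at hr; rw [hr, ← EReal.coe_mul]; exact EReal.coe_ne_bot _
    _ = (tb : EReal) * Filter.limsup (fun i => elog (c i) (M u i)) lf +
          (th : EReal) * Filter.limsup (fun i => elog (c i) (M w i)) lf := by
        rw [limsup_coe_mul' tb htbp, limsup_coe_mul' th hthp]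

end Main


section Key

open Filter MeasureTheory Set Topology

lemma keybound {ι : Type*} (lf : Filter ι) [lf.NeBot]
    (μ : ι → Measure ℝ) [∀ i, IsProbabilityMeasure (μ i)]
    (c : ι → ℝ) (hc : ∀ i, 0 < c i) (hc0 : Filter.Tendsto c lf (nhds (0 : ℝ)))
    {a b t t0 : ℝ} (hab : a < b) (ht : 0 < t) (htt0 : t < t0) :
    genLogMGF lf μ c t ≤
      max (max ((t * a : ℝ) : EReal)
          (((t * b : ℝ) : EReal) + Filter.limsup (fun i => elog (c i) (μ i (Set.Ioo a b))) lf))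
        ((((t - t0) * b : ℝ) : EReal) + genLogMGF lf μ c t0) := by
  set M : ℝ → ι → ENNReal :=
    fun s i => ∫⁻ x : ℝ, ENNReal.ofReal (Real.exp (s * x / c i)) ∂ (μ i) with hM
  -- pointwise measure bound
  have hmeas : ∀ (s : ℝ) (i : ι), Measurable fun x : ℝ => ENNReal.ofReal (Real.exp (s * x / c i)) :=
    fun s i => (((measurable_id.const_mul s).div_const (c i)).exp).ennreal_ofReal
  have hsplit : ∀ i, M t i ≤
      ENNReal.ofReal (Real.exp (t * a / c i)) +
      ENNReal.ofReal (Real.exp (t * b / c i)) * μ i (Set.Ioo a b) +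
      ENNReal.ofReal (Real.exp ((t - t0) * b / c i)) * M t0 i := by
    intro i
    set C := c i with hC
    have hCp : 0 < C := hc i
    set f : ℝ → ENNReal := fun x => ENNReal.ofReal (Real.exp (t * x / C)) with hf
    have hfm : Measurable f := hmeas t i
    have hle : ∀ z, f z ≤ (Set.Iic a).indicator f z + (Set.Ioo a b).indicator f z +
        (Set.Ici b).indicator f z := by
      intro z
      rcases le_or_gt z a with h | h
      · rw [Set.indicator_of_mem (show z ∈ Set.Iic a from h)]
        exact le_add_right (le_add_right le_rfl)
      rcases lt_or_ge z b with h2 | h2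
      · rw [Set.indicator_of_mem (show z ∈ Set.Ioo a b from ⟨h, h2⟩)]
        exact le_add_right (le_add_left le_rfl)
      · rw [Set.indicator_of_mem (show z ∈ Set.Ici b from h2)]
        exact le_add_left le_rfl
    have hstep : M t i ≤ ∫⁻ z in Set.Iic a, f z ∂(μ i) + ∫⁻ z in Set.Ioo a b, f z ∂(μ i) +
        ∫⁻ z in Set.Ici b, f z ∂(μ i) := by
      calc M t i = ∫⁻ z, f z ∂(μ i) := rfl
        _ ≤ ∫⁻ z, ((Set.Iic a).indicator f z + (Set.Ioo a b).indicator f z +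
            (Set.Ici b).indicator f z) ∂(μ i) := lintegral_mono hle
        _ = _ := by
            rw [lintegral_add_left (f := fun z =>
                (Set.Iic a).indicator f z + (Set.Ioo a b).indicator f z)
              ((hfm.indicator measurableSet_Iic).add (hfm.indicator measurableSet_Ioo)),
              lintegral_add_left (hfm.indicator measurableSet_Iic),
              lintegral_indicator measurableSet_Iic,
              lintegral_indicator measurableSet_Ioo,
              lintegral_indicator measurableSet_Ici]
    have h1 : ∫⁻ z in Set.Iic a, f z ∂(μ i) ≤ ENNReal.ofReal (Real.exp (t * a / C)) := by
      calc ∫⁻ z in Set.Iic a, f z ∂(μ i)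
          ≤ ∫⁻ _ in Set.Iic a, ENNReal.ofReal (Real.exp (t * a / C)) ∂(μ i) := by
            refine setLIntegral_mono measurable_const fun z hz => ?_
            exact ENNReal.ofReal_le_ofReal (Real.exp_le_exp.2 (by
              exact div_le_div_of_nonneg_right (mul_le_mul_of_nonneg_left hz ht.le) hCp.le))
        _ = ENNReal.ofReal (Real.exp (t * a / C)) * μ i (Set.Iic a) := setLIntegral_const _ _
        _ ≤ ENNReal.ofReal (Real.exp (t * a / C)) * 1 := mul_le_mul_right prob_le_one _
        _ = _ := mul_one _
    have h2 : ∫⁻ z in Set.Ioo a b, f z ∂(μ i) ≤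
        ENNReal.ofReal (Real.exp (t * b / C)) * μ i (Set.Ioo a b) := by
      calc ∫⁻ z in Set.Ioo a b, f z ∂(μ i)
          ≤ ∫⁻ _ in Set.Ioo a b, ENNReal.ofReal (Real.exp (t * b / C)) ∂(μ i) := by
            refine setLIntegral_mono measurable_const fun z hz => ?_
            exact ENNReal.ofReal_le_ofReal (Real.exp_le_exp.2 (by
              exact div_le_div_of_nonneg_right (mul_le_mul_of_nonneg_left hz.2.le ht.le) hCp.le))
        _ = _ := setLIntegral_const _ _
    have h3 : ∫⁻ z in Set.Ici b, f z ∂(μ i) ≤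
        ENNReal.ofReal (Real.exp ((t - t0) * b / C)) * M t0 i := by
      calc ∫⁻ z in Set.Ici b, f z ∂(μ i)
          ≤ ∫⁻ z in Set.Ici b, ENNReal.ofReal (Real.exp ((t - t0) * b / C)) *
              ENNReal.ofReal (Real.exp (t0 * z / C)) ∂(μ i) := by
            refine setLIntegral_mono (measurable_const.mul (hmeas t0 i)) fun z hz => ?_
            rw [← ENNReal.ofReal_mul (Real.exp_nonneg _), ← Real.exp_add]
            refine ENNReal.ofReal_le_ofReal (Real.exp_le_exp.2 ?_)
            rw [← add_div]
            refine div_le_div_of_nonneg_right ?_ hCp.le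
            nlinarith [mul_le_mul_of_nonpos_left hz (by linarith : t - t0 ≤ 0)]
        _ ≤ ∫⁻ z, ENNReal.ofReal (Real.exp ((t - t0) * b / C)) *
              ENNReal.ofReal (Real.exp (t0 * z / C)) ∂(μ i) :=
            setLIntegral_le_lintegral _ _
        _ = _ := lintegral_const_mul _ (hmeas t0 i)
    calc M t i ≤ _ := hstep
      _ ≤ _ := add_le_add (add_le_add h1 h2) h3
  -- pointwise elog bound
  have hlog3 : ENNReal.log (3 : ENNReal) = ((Real.log 3 : ℝ) : EReal) := by
    rw [show (3 : ENNReal) = ENNReal.ofReal (3:ℝ) by norm_num]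
    exact ENNReal.log_ofReal_of_pos (by norm_num)
  have hpoint : ∀ i, elog (c i) (M t i) ≤
      ((c i * Real.log 3 : ℝ) : EReal) +
        max (max ((t * a : ℝ) : EReal) (((t * b : ℝ) : EReal) + elog (c i) (μ i (Set.Ioo a b))))
          ((((t - t0) * b : ℝ) : EReal) + elog (c i) (M t0 i)) := by
    intro i
    set C := c i with hC
    have hCp : 0 < C := hc i
    set A := ENNReal.ofReal (Real.exp (t * a / C)) with hA
    set B := ENNReal.ofReal (Real.exp (t * b / C)) * μ i (Set.Ioo a b) with hB
    set D := ENNReal.ofReal (Real.exp ((t - t0) * b / C)) * M t0 i with hD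
    have hsum3 : A + B + D ≤ 3 * max (max A B) D := by
      have hA' : A ≤ max (max A B) D := le_max_of_le_left (le_max_left _ _)
      have hB' : B ≤ max (max A B) D := le_max_of_le_left (le_max_right _ _)
      have hD' : D ≤ max (max A B) D := le_max_right _ _
      calc A + B + D ≤ max (max A B) D + max (max A B) D + max (max A B) D :=
            add_le_add (add_le_add hA' hB') hD'
        _ = 3 * max (max A B) D := by ring
    have elogA : elog C A = ((t * a : ℝ) : EReal) := by
      rw [elog, hA, ENNReal.log_ofReal_of_pos (Real.exp_pos _), Real.log_exp, ← EReal.coe_mul,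
        mul_div_cancel₀ _ hCp.ne']
    have elogB : elog C B = ((t * b : ℝ) : EReal) + elog C (μ i (Set.Ioo a b)) := by
      rw [elog, hB, ENNReal.log_mul_add, ENNReal.log_ofReal_of_pos (Real.exp_pos _), Real.log_exp,
        emul_coe_add C hCp, mul_div_cancel₀ _ hCp.ne', elog]
    have elogD : elog C D = (((t - t0) * b : ℝ) : EReal) + elog C (M t0 i) := by
      rw [elog, hD, ENNReal.log_mul_add, ENNReal.log_ofReal_of_pos (Real.exp_pos _), Real.log_exp,
        emul_coe_add C hCp, mul_div_cancel₀ _ hCp.ne', elog]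
    calc elog C (M t i) ≤ elog C (3 * max (max A B) D) :=
          elog_mono _ hCp.le ((hsplit i).trans hsum3)
      _ = (C : EReal) * (ENNReal.log 3 + ENNReal.log (max (max A B) D)) := by
          rw [elog, ENNReal.log_mul_add]
      _ = ((C * Real.log 3 : ℝ) : EReal) + (C : EReal) * ENNReal.log (max (max A B) D) := by
          rw [hlog3, emul_coe_add C hCp]
      _ = ((C * Real.log 3 : ℝ) : EReal) +
            max (max (elog C A) (elog C B)) (elog C D) := by
          rw [ENNReal.log_monotone.map_max, ENNReal.log_monotone.map_max,
            emul_max C hCp.le, emul_max C hCp.le, elog, elog, elog]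
      _ = _ := by rw [elogA, elogB, elogD]
  -- limsup step
  have hL : genLogMGF lf μ c t = Filter.limsup (fun i => elog (c i) (M t i)) lf := rfl
  have hL0 : genLogMGF lf μ c t0 = Filter.limsup (fun i => elog (c i) (M t0 i)) lf := rfl
  have hconst : Filter.limsup (fun i => ((c i * Real.log 3 : ℝ) : EReal)) lf = 0 := by
    apply Filter.Tendsto.limsup_eq
    have : Filter.Tendsto (fun i => c i * Real.log 3) lf (nhds 0) := by
      simpa using hc0.mul_const (Real.log 3)
    have hcont : Filter.Tendsto (fun r : ℝ => (r : EReal)) (nhds 0) (nhds ((0:ℝ) : EReal)) :=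
      (continuous_coe_real_ereal).tendsto 0
    simpa only [EReal.coe_zero, Function.comp_def] using hcont.comp this
  rw [hL]
  calc Filter.limsup (fun i => elog (c i) (M t i)) lf
      ≤ Filter.limsup (fun i => ((c i * Real.log 3 : ℝ) : EReal) +
          max (max ((t * a : ℝ) : EReal)
            (((t * b : ℝ) : EReal) + elog (c i) (μ i (Set.Ioo a b))))
            ((((t - t0) * b : ℝ) : EReal) + elog (c i) (M t0 i))) lf :=
        Filter.limsup_le_limsup (Filter.Eventually.of_forall hpoint)
    _ ≤ Filter.limsup (fun i => ((c i * Real.log 3 : ℝ) : EReal)) lf +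
          Filter.limsup (fun i =>
            max (max ((t * a : ℝ) : EReal)
              (((t * b : ℝ) : EReal) + elog (c i) (μ i (Set.Ioo a b))))
              ((((t - t0) * b : ℝ) : EReal) + elog (c i) (M t0 i))) lf := by
        apply limsup_add_le'
        · left; rw [hconst]; exact EReal.zero_ne_bot
        · left; rw [hconst]; exact EReal.zero_ne_top
    _ = Filter.limsup (fun i =>
            max (max ((t * a : ℝ) : EReal)
              (((t * b : ℝ) : EReal) + elog (c i) (μ i (Set.Ioo a b))))
              ((((t - t0) * b : ℝ) : EReal) + elog (c i) (M t0 i))) lf := by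
        rw [hconst, zero_add]
    _ ≤ max (max ((t * a : ℝ) : EReal)
          (((t * b : ℝ) : EReal) + Filter.limsup (fun i => elog (c i) (μ i (Set.Ioo a b))) lf))
          ((((t - t0) * b : ℝ) : EReal) + genLogMGF lf μ c t0) := by
        refine (limsup_max_le' _ _).trans (max_le_max ?_ ?_)
        · refine (limsup_max_le' _ _).trans (max_le_max ?_ ?_)
          · exact le_of_eq (Filter.limsup_const _)
          · refine (limsup_add_le' _ _ ?_ ?_).trans ?_
            · left; rw [Filter.limsup_const]; exact EReal.coe_ne_bot _
            · left; rw [Filter.limsup_const]; exact EReal.coe_ne_top _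
            · rw [Filter.limsup_const]
        · refine (limsup_add_le' _ _ ?_ ?_).trans ?_
          · left; rw [Filter.limsup_const]; exact EReal.coe_ne_bot _
          · left; rw [Filter.limsup_const]; exact EReal.coe_ne_top _
          · rw [Filter.limsup_const, hL0]

end Key

set_option maxHeartbeats 2000000 in
theorem statement4
    {ι : Type*} (lf : Filter ι) [lf.NeBot]
    (μ : ι → Measure ℝ) [∀ i, IsProbabilityMeasure (μ i)]
    (c : ι → ℝ) (hc : ∀ i, 0 < c i) (hc0 : Filter.Tendsto c lf (nhds (0 : ℝ)))
    (L : ℝ → EReal) (hL : L = genLogMGF lf μ c)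
    (eps : ℝ) (heps : 0 < eps)
    (hdiff : ∀ t ∈ Set.Ioo (0:ℝ) eps, EDifferentiableAt L t)
    (hsup : ∀ t ∈ Set.Ioo (0:ℝ) eps, ∃ s ∈ Set.Ioo (0:ℝ) eps,
      rightDerivE L t < rightDerivE L s)
    (hbot : rightLimE (rightDerivE L) 0 = ⊥)
    (hrc : Filter.Tendsto L (nhdsWithin 0 (Set.Ioi 0)) (nhds (0 : EReal)))
    (x y : ι → EReal)
    (hx : Filter.Tendsto x lf (nhds (⊥ : EReal)))
    (hy : ⊥ < Filter.liminf y lf) :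
    Filter.limsup (fun i => elog (c i) (muIccE (μ i) (x i) (y i))) lf = 0 ∧
    Filter.limsup (fun i => elog (c i) (muIooE (μ i) (x i) (y i))) lf = 0 ∧
    Filter.Tendsto (fun i => LegendreExt L (x i)) lf (nhds (0 : EReal)) := by
  subst hL
  set L := genLogMGF lf μ c with hLdef
  have hL0 : L 0 = 0 := genLogMGF_zero lf μ c
  have hconv : ∀ {u v w : ℝ}, u < v → v < w →
      ((L u ≠ ⊥ ∧ L u ≠ ⊤) ∨ (L w ≠ ⊥ ∧ L w ≠ ⊤)) →
      L v ≤ (((w-v)/(w-u) : ℝ) : EReal) * L u + (((v-u)/(w-u) : ℝ) : EReal) * L w :=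
    fun huv hvw hfin => genLogMGF_convex lf μ c hc huv hvw hfin
  -- L never takes the value ⊥ on (0,∞)
  have hLnb : ∀ s : ℝ, 0 < s → L s ≠ ⊥ := by
    intro s hs hbots
    set v := min s eps / 2 with hv
    have hmin : 0 < min s eps := lt_min hs heps
    have hv1 : 0 < v := by rw [hv]; linarith
    have hv2 : v < s := by
      have h1 : min s eps ≤ s := min_le_left _ _
      rw [hv]; linarith
    have hv3 : v < eps := by
      have h1 : min s eps ≤ eps := min_le_right _ _
      rw [hv]; linarith
    obtain ⟨rv, hrv⟩ := (hdiff v ⟨hv1, hv3⟩).1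
    have hcv := hconv hv1 hv2 (Or.inl ⟨by rw [hL0]; exact EReal.zero_ne_bot,
      by rw [hL0]; exact EReal.zero_ne_top⟩)
    rw [hL0, hbots, mul_zero, zero_add] at hcv
    have hpos : (0:EReal) < (((v-0)/(s-0) : ℝ) : EReal) :=
      EReal.coe_pos.2 (div_pos (by linarith) (by linarith))
    rw [EReal.mul_bot_of_pos hpos, hrv] at hcv
    exact (EReal.bot_lt_coe rv).not_ge hcv
  -- slope from the origin
  have hslope : ∀ t s : ℝ, 0 < t → t < s → L t ≤ ((t/s : ℝ) : EReal) * L s := by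
    intro t s ht hts
    have hcv := hconv ht hts (Or.inl ⟨by rw [hL0]; exact EReal.zero_ne_bot,
      by rw [hL0]; exact EReal.zero_ne_top⟩)
    rw [hL0, mul_zero, zero_add] at hcv
    simpa [sub_zero] using hcv
  -- key consequence of `hbot`: arbitrarily negative slopes
  have hB : ∀ K : ℝ, ∃ t0 : ℝ, 0 < t0 ∧ t0 < eps ∧ L t0 < ((t0 * K : ℝ) : EReal) := by
    intro K
    by_contra hcon
    push_neg at hcon
    have hsK : ∀ s : ℝ, 0 < s → ((s * K : ℝ) : EReal) ≤ L s := by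
      intro s hs
      by_cases hse : s < eps
      · exact hcon s hs hse
      · push_neg at hse
        have hv0 : 0 < eps / 2 := by linarith
        have hvs : eps / 2 < s := by linarith
        have h1 : ((eps / 2 * K : ℝ) : EReal) ≤ L (eps / 2) := hcon _ hv0 (by linarith)
        have h2 : L (eps / 2) ≤ ((eps / 2 / s : ℝ) : EReal) * L s := hslope _ s hv0 hvs
        rcases eq_or_ne (L s) ⊤ with hstop | hsnt
        · rw [hstop]; exact le_top
        · obtain ⟨rs, hrs⟩ := ereal_ne_bot_top (hLnb s hs) hsnt
          rw [hrs, ← EReal.coe_mul] at h2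
          have hreal : eps / 2 * K ≤ eps / 2 / s * rs := EReal.coe_le_coe_iff.1 (h1.trans h2)
          rw [hrs, EReal.coe_le_coe_iff]
          have hs0 : (0:ℝ) < s := hs
          have hd : eps / 2 / s * rs = eps / 2 * rs / s := by ring
          rw [hd, le_div_iff₀ hs0] at hreal
          have := le_of_mul_le_mul_left
            (by linarith : eps / 2 * (K * s) ≤ eps / 2 * rs) hv0
          linarith
    have hder : ∀ t : ℝ, t ∈ Set.Ioo 0 eps → (K : EReal) ≤ rightDerivE L t := by
      intro t ht
      obtain ⟨rt, hrt⟩ := (hdiff t ht).1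
      rw [rightDerivE]
      split_ifs with h1 h2
      · exact le_top
      · obtain ⟨s, hts, hsb⟩ := h2
        exact absurd hsb (hLnb s (ht.1.trans hts))
      · refine le_iInf₂ fun s hs => ?_
        have hts : t < s := hs
        have hs0 : 0 < s := ht.1.trans hts
        have hsK' := hsK s hs0
        have hst := hslope t s ht.1 hts
        rcases eq_or_ne (L s) ⊤ with hstop | hsnt
        · rw [hstop, hrt, EReal.top_sub_coe, EReal.top_mul_of_pos]
          · exact le_top
          · exact EReal.coe_pos.2 (inv_pos.2 (sub_pos.2 hts))
        · obtain ⟨rs, hrs⟩ := ereal_ne_bot_top (hLnb s hs0) hsnt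
          rw [hrs, hrt, ← EReal.coe_sub, ← EReal.coe_mul, EReal.coe_le_coe_iff]
          rw [hrs, EReal.coe_le_coe_iff] at hsK'
          rw [hrs, hrt, ← EReal.coe_mul, EReal.coe_le_coe_iff] at hst
          have hst0 : 0 < s - t := sub_pos.2 hts
          rw [div_mul_eq_mul_div, le_div_iff₀ hs0] at hst
          rw [← div_eq_mul_inv, le_div_iff₀ hst0]
          nlinarith [mul_le_mul_of_nonneg_right hsK' hst0.le]
    have hIoo : Set.Ioo (0:ℝ) eps ∈ nhdsWithin (0:ℝ) (Set.Ioi 0) :=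
      Ioo_mem_nhdsGT_of_mem ⟨le_refl 0, heps⟩
    have hfreq : ∀ᶠ t in nhdsWithin (0:ℝ) (Set.Ioi 0), (K : EReal) ≤ rightDerivE L t := by
      filter_upwards [hIoo] with t ht using hder t ht
    have hle : (K : EReal) ≤ Filter.limsup (rightDerivE L) (nhdsWithin 0 (Set.Ioi 0)) :=
      Filter.le_limsup_of_frequently_le hfreq.frequently
    rw [rightLimE] at hbot
    rw [hbot] at hle
    exact (EReal.bot_lt_coe K).not_ge hle
  -- L = ⊤ on the negative axis
  have hLtop : ∀ t : ℝ, t < 0 → L t = ⊤ := by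
    intro t ht
    by_contra htt
    by_cases hbt : L t = ⊥
    · obtain ⟨t0, ht00, ht0e, hlt0⟩ := hB 0
      have hfin : L t0 ≠ ⊥ ∧ L t0 ≠ ⊤ := ⟨hLnb t0 ht00, hlt0.ne_top⟩
      obtain ⟨r0, hr0⟩ := ereal_ne_bot_top hfin.1 hfin.2
      have hcv := hconv ht ht00 (Or.inr hfin)
      rw [hL0, hbt, hr0, ← EReal.coe_mul] at hcv
      rw [EReal.mul_bot_of_pos (EReal.coe_pos.2 (div_pos (by linarith) (by linarith))),
        EReal.bot_add] at hcv
      simp at hcv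
    · obtain ⟨l, hl⟩ := ereal_ne_bot_top hbt htt
      obtain ⟨t0, ht00, ht0e, hlt0⟩ := hB (l / t)
      have hfin : L t0 ≠ ⊥ ∧ L t0 ≠ ⊤ := ⟨hLnb t0 ht00, hlt0.ne_top⟩
      obtain ⟨r0, hr0⟩ := ereal_ne_bot_top hfin.1 hfin.2
      have hr0lt : r0 < t0 * (l / t) := by
        rw [hr0] at hlt0; exact_mod_cast hlt0
      have hcv := hconv ht ht00 (Or.inr hfin)
      rw [hL0, hl, hr0, ← EReal.coe_mul, ← EReal.coe_mul, ← EReal.coe_add,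
        ← EReal.coe_zero, EReal.coe_le_coe_iff] at hcv
      have hden : 0 < t0 - t := by linarith
      rw [sub_zero, zero_sub] at hcv
      rw [div_mul_eq_mul_div, div_mul_eq_mul_div, ← add_div, le_div_iff₀ hden,
        zero_mul] at hcv
      have hmul := mul_lt_mul_of_neg_left hr0lt ht
      rw [show t * (t0 * (l / t)) = t0 * l by field_simp [ne_of_lt ht]] at hmul
      linarith
  -- choose a finite lower endpoint level b
  obtain ⟨b, hbb, hby⟩ := EReal.exists_between_coe_real hy
  -- upper bounds for the two limsups
  have hIooUB : Filter.limsup (fun i => elog (c i) (muIooE (μ i) (x i) (y i))) lf ≤ 0 :=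
    Filter.limsup_le_of_le (by isBoundedDefault)
      (Filter.Eventually.of_forall fun i => elog_le_zero _ (hc i).le prob_le_one)
  have hIccUB : Filter.limsup (fun i => elog (c i) (muIccE (μ i) (x i) (y i))) lf ≤ 0 :=
    Filter.limsup_le_of_le (by isBoundedDefault)
      (Filter.Eventually.of_forall fun i => elog_le_zero _ (hc i).le prob_le_one)
  -- lower bound for the open-interval limsup
  have hIooLB : (0:EReal) ≤
      Filter.limsup (fun i => elog (c i) (muIooE (μ i) (x i) (y i))) lf := by
    by_contra hTneg
    push_neg at hTneg
    obtain ⟨e, hTe, he0⟩ := EReal.lt_iff_exists_real_btwn.1 hTneg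
    have he0' : e < 0 := by exact_mod_cast he0
    obtain ⟨t0, ht00, ht0e, hlt0⟩ := hB (b - 1)
    obtain ⟨r0, hr0⟩ := ereal_ne_bot_top (hLnb t0 ht00) hlt0.ne_top
    have hr0lt : r0 < t0 * (b - 1) := by rw [hr0] at hlt0; exact_mod_cast hlt0
    set η := -e with hηdef
    have hηp : 0 < η := by rw [hηdef]; linarith
    set m := min η t0 with hmdef
    have hm0 : 0 < m := lt_min hηp ht00
    have hmη : m ≤ η := min_le_left _ _
    have hmt0 : m ≤ t0 := min_le_right _ _
    set β := min (m/4) 1 with hβdef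
    have hβp : 0 < β := lt_min (by linarith) one_pos
    have hβ1 : β ≤ 1 := min_le_right _ _
    have hβm : β ≤ m/4 := min_le_left _ _
    set δ' := min t0 (m / (2 * (|b| + 1))) with hδ'def
    have habs : (0:ℝ) < |b| + 1 := by positivity
    have hδp : 0 < δ' := lt_min ht00 (by positivity)
    have hev2 : ∀ᶠ s in nhdsWithin (0:ℝ) (Set.Ioi 0), ((-β : ℝ) : EReal) < L s :=
      hrc.eventually (eventually_gt_nhds (by exact_mod_cast (by linarith : -β < (0:ℝ))))
    have hev1 : Set.Ioo (0:ℝ) δ' ∈ nhdsWithin (0:ℝ) (Set.Ioi 0) :=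
      Ioo_mem_nhdsGT_of_mem ⟨le_refl 0, hδp⟩
    obtain ⟨t, htL, htIoo⟩ := (hev2.and (Filter.eventually_of_mem hev1 fun s hs => hs)).exists
    have ht0 : 0 < t := htIoo.1
    have htδ : t < δ' := htIoo.2
    have htt0 : t < t0 := lt_of_lt_of_le htδ (min_le_left _ _)
    have htm : t * (|b| + 1) ≤ m / 2 := by
      have h1 : t ≤ m / (2 * (|b| + 1)) := (lt_of_lt_of_le htδ (min_le_right _ _)).le
      have h2 : m / (2 * (|b| + 1)) * (|b| + 1) = m / 2 := by field_simp
      calc t * (|b| + 1) ≤ m / (2 * (|b| + 1)) * (|b| + 1) :=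
            mul_le_mul_of_nonneg_right h1 habs.le
        _ = m / 2 := h2
    set a := min (-(β+1)/t) (b-1) with hadef
    have hab : a < b := lt_of_le_of_lt (min_le_right _ _) (by linarith)
    have hta : t * a ≤ -(β+1) := by
      have h1 : t * a ≤ t * (-(β+1)/t) :=
        mul_le_mul_of_nonneg_left (min_le_left _ _) ht0.le
      have h2 : t * (-(β+1)/t) = -(β+1) := by field_simp
      linarith [h1, h2.le]
    have hSIoo : Filter.limsup (fun i => elog (c i) (μ i (Set.Ioo a b))) lf ≤ (e : EReal) := by
      refine le_trans (Filter.limsup_le_limsup ?_) hTe.le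
      filter_upwards [hx (Iio_mem_nhds (EReal.bot_lt_coe a)),
        Filter.eventually_lt_of_lt_liminf hby] with i hxa hyb
      refine elog_mono _ (hc i).le (measure_mono fun z hz => ?_)
      exact ⟨lt_trans hxa (EReal.coe_lt_coe_iff.2 hz.1),
        lt_trans (EReal.coe_lt_coe_iff.2 hz.2) hyb⟩
    have hkey := keybound lf μ c hc hc0 hab ht0 htt0
    have hmax : max (max ((t * a : ℝ) : EReal)
        (((t * b : ℝ) : EReal) + Filter.limsup (fun i => elog (c i) (μ i (Set.Ioo a b))) lf))
        ((((t - t0) * b : ℝ) : EReal) + L t0) ≤ ((-(2*β) : ℝ) : EReal) := by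
      have hbabs : b ≤ |b| := le_abs_self b
      apply max_le
      · apply max_le
        · exact EReal.coe_le_coe_iff.2 (by nlinarith)
        · calc ((t * b : ℝ) : EReal) + Filter.limsup
                (fun i => elog (c i) (μ i (Set.Ioo a b))) lf
              ≤ ((t * b : ℝ) : EReal) + (e : EReal) := add_le_add le_rfl hSIoo
            _ = ((t * b + e : ℝ) : EReal) := by rw [EReal.coe_add]
            _ ≤ ((-(2*β) : ℝ) : EReal) := EReal.coe_le_coe_iff.2 (by nlinarith)
      · calc (((t - t0) * b : ℝ) : EReal) + L t0
            = (((t - t0) * b + r0 : ℝ) : EReal) := by rw [hr0, EReal.coe_add]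
          _ ≤ ((-(2*β) : ℝ) : EReal) := by
              refine EReal.coe_le_coe_iff.2 ?_
              have h5 : (t - t0) * b + r0 < t * b - t0 := by nlinarith
              nlinarith
    have hLtle : L t ≤ ((-(2*β) : ℝ) : EReal) := hkey.trans hmax
    have hfalse : ((-β : ℝ) : EReal) < ((-(2*β) : ℝ) : EReal) := lt_of_lt_of_le htL hLtle
    rw [EReal.coe_lt_coe_iff] at hfalse
    linarith
  have hIoo0 : Filter.limsup (fun i => elog (c i) (muIooE (μ i) (x i) (y i))) lf = 0 :=
    le_antisymm hIooUB hIooLB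
  have hIccLB : (0:EReal) ≤
      Filter.limsup (fun i => elog (c i) (muIccE (μ i) (x i) (y i))) lf := by
    rw [← hIoo0]
    refine Filter.limsup_le_limsup (Filter.Eventually.of_forall fun i => ?_)
    exact elog_mono _ (hc i).le (measure_mono fun z hz => ⟨hz.1.le, hz.2.le⟩)
  have hIcc0 : Filter.limsup (fun i => elog (c i) (muIccE (μ i) (x i) (y i))) lf = 0 :=
    le_antisymm hIccUB hIccLB
  -- part 3
  have hrl : rightLimE L 0 = 0 := hrc.limsup_eq
  have hExtBot : LegendreExt L ⊥ = 0 := by rw [LegendreExt, if_pos rfl, hrl, neg_zero]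
  have claim3 : ∀ η : ℝ, 0 < η → ∃ r : ℝ, ∀ x' : EReal, x' < (r : EReal) →
      0 ≤ LegendreExt L x' ∧ LegendreExt L x' ≤ (η : EReal) := by
    intro η hη
    have hev : {s : ℝ | ((-(η/4) : ℝ) : EReal) < L s ∧ L s < ((η/4 : ℝ) : EReal)} ∈
        nhdsWithin (0:ℝ) (Set.Ioi 0) := by
      have h1 := hrc.eventually (eventually_gt_nhds
        (show ((-(η/4):ℝ):EReal) < 0 by exact_mod_cast (by linarith : -(η/4) < (0:ℝ))))
      have h2 := hrc.eventually (eventually_lt_nhds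
        (show (0:EReal) < ((η/4:ℝ):EReal) by exact_mod_cast (by linarith : (0:ℝ) < η/4)))
      exact h1.and h2
    obtain ⟨κ, hκ, hsub⟩ := mem_nhdsGT_iff_exists_Ioo_subset.1 hev
    have hκ0 : (0:ℝ) < κ := hκ
    set δ := min κ eps / 3 with hδdef
    have hminκ : 0 < min κ eps := lt_min hκ0 heps
    have hδ0 : 0 < δ := by rw [hδdef]; linarith
    have hδκ : 2*δ < κ := by
      have := min_le_left κ eps; rw [hδdef]; linarith
    have hδe : 2*δ < eps := by
      have := min_le_right κ eps; rw [hδdef]; linarith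
    obtain ⟨l1, hl1⟩ := (hdiff δ ⟨hδ0, by linarith⟩).1
    obtain ⟨l2, hl2⟩ := (hdiff (2*δ) ⟨by linarith, hδe⟩).1
    have hb1 := hsub (⟨hδ0, by linarith⟩ : δ ∈ Set.Ioo 0 κ)
    have hb2 := hsub (⟨by linarith, hδκ⟩ : 2*δ ∈ Set.Ioo 0 κ)
    rw [Set.mem_setOf_eq, hl1] at hb1
    rw [Set.mem_setOf_eq, hl2] at hb2
    have hl1b : -(η/4) < l1 ∧ l1 < η/4 := ⟨by exact_mod_cast hb1.1, by exact_mod_cast hb1.2⟩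
    have hl2b : -(η/4) < l2 ∧ l2 < η/4 := ⟨by exact_mod_cast hb2.1, by exact_mod_cast hb2.2⟩
    refine ⟨min (l1/δ) 0, fun x' hx' => ?_⟩
    induction x' using EReal.rec with
    | bot =>
      rw [hExtBot]
      exact ⟨le_refl _, by exact_mod_cast hη.le⟩
    | top => exact absurd hx' (by simp)
    | coe ξ =>
      have hξ : ξ < min (l1/δ) 0 := by exact_mod_cast hx'
      have hξ0 : ξ ≤ 0 := (lt_of_lt_of_le hξ (min_le_right _ _)).le
      have hξl : ξ ≤ l1/δ := (lt_of_lt_of_le hξ (min_le_left _ _)).le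
      rw [LegendreExt, if_neg (EReal.coe_ne_bot ξ), if_neg (EReal.coe_ne_top ξ), LegendreEE]
      constructor
      · have h0 : ((0:ℝ) : EReal) * (ξ : EReal) - L 0 = 0 := by
          rw [hL0]; simp
        calc (0:EReal) = ((0:ℝ) : EReal) * (ξ : EReal) - L 0 := h0.symm
          _ ≤ ⨆ s : ℝ, ((s : EReal) * (ξ : EReal) - L s) :=
            le_iSup (fun s : ℝ => ((s : EReal) * (ξ : EReal) - L s)) 0
      · apply iSup_le
        intro s
        rcases lt_trichotomy s 0 with hs | hs | hs
        · rw [hLtop s hs, EReal.sub_top]; exact bot_le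
        · rw [hs, hL0, EReal.coe_zero, zero_mul, sub_zero]
          exact_mod_cast hη.le
        · rcases lt_trichotomy s δ with hsδ | hsδ | hsδ
          · obtain ⟨rs, hrs⟩ := (hdiff s ⟨hs, by linarith⟩).1
            have hcv := hconv hsδ (show δ < 2*δ by linarith)
              (Or.inl ⟨by rw [hrs]; exact EReal.coe_ne_bot _,
                by rw [hrs]; exact EReal.coe_ne_top _⟩)
            rw [hl1, hrs, hl2, ← EReal.coe_mul, ← EReal.coe_mul, ← EReal.coe_add,
              EReal.coe_le_coe_iff] at hcv
            have hD : 0 < 2*δ - s := by linarith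
            rw [div_mul_eq_mul_div, div_mul_eq_mul_div, ← add_div, le_div_iff₀ hD] at hcv
            rw [hrs, ← EReal.coe_mul, ← EReal.coe_sub, EReal.coe_le_coe_iff]
            nlinarith [mul_nonpos_of_nonneg_of_nonpos hs.le hξ0, hl1b.1, hl2b.2, hl1b.2, hl2b.1]
          · rw [hsδ, hl1, ← EReal.coe_mul, ← EReal.coe_sub, EReal.coe_le_coe_iff]
            have hid : δ * (l1/δ) = l1 := by field_simp
            have h1 : δ * ξ ≤ δ * (l1/δ) := mul_le_mul_of_nonneg_left hξl hδ0.le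
            nlinarith [hl1b.1, hl1b.2]
          · have hsl := hslope δ s hδ0 hsδ
            rcases eq_or_ne (L s) ⊤ with hstop | hsnt
            · rw [hstop, EReal.sub_top]; exact bot_le
            · obtain ⟨rs, hrs⟩ := ereal_ne_bot_top (hLnb s hs) hsnt
              rw [hrs, hl1, ← EReal.coe_mul, EReal.coe_le_coe_iff] at hsl
              rw [hrs, ← EReal.coe_mul, ← EReal.coe_sub, EReal.coe_le_coe_iff]
              have hs0 : (0:ℝ) < s := hs
              rw [div_mul_eq_mul_div, le_div_iff₀ hs0] at hsl
              have h1 : s * ξ ≤ s * (l1/δ) := mul_le_mul_of_nonneg_left hξl hs0.le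
              have h3 : l1 * s / δ ≤ rs := (div_le_iff₀ hδ0).2 (by linarith)
              have h2 : s * (l1/δ) = l1 * s / δ := by ring
              nlinarith
  refine ⟨hIcc0, hIoo0, ?_⟩
  rw [tendsto_order]
  constructor
  · intro b' hb'
    obtain ⟨r, hr⟩ := claim3 1 one_pos
    filter_upwards [hx (Iio_mem_nhds (EReal.bot_lt_coe r))] with i hi
    exact lt_of_lt_of_le hb' (hr _ hi).1
  · intro b' hb'
    obtain ⟨η, hη0, hηb⟩ := EReal.exists_between_coe_real hb'
    have hη0' : (0:ℝ) < η := by exact_mod_cast hη0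
    obtain ⟨r, hr⟩ := claim3 η hη0'
    filter_upwards [hx (Iio_mem_nhds (EReal.bot_lt_coe r))] with i hi
    exact lt_of_le_of_lt (hr _ hi).2 hηb
end

section
/- The restriction L̄|[0,+∞) is improper (i.e. not proper) if and only if there exists T ∈ (0, +∞] such that L̄(t) = −∞ and L̄'_r(s) = −∞ for all t ∈ (0, T) and all s ∈ [0, T), and L̄(t) = +∞ and L̄'_r(s) = +∞ for all t ∈ (T, +∞) and all s ∈ [T, +∞). -/
open Filter MeasureTheory Set Topology

noncomputable section S7sec
namespace S7

def M {ι : Type*} (μ : ι → Measure ℝ) (c : ι → ℝ) (i : ι) (t : ℝ) : ENNReal :=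
  ∫⁻ x : ℝ, ENNReal.ofReal (Real.exp (t * x / c i)) ∂ (μ i)

lemma M_zero {ι : Type*} (μ : ι → Measure ℝ) [∀ i, IsProbabilityMeasure (μ i)]
    (c : ι → ℝ) (i : ι) : M μ c i 0 = 1 := by
  simp [M]

lemma meas_integrand (u co : ℝ) :
    Measurable fun x : ℝ => ENNReal.ofReal (Real.exp (u * x / co)) := by
  fun_prop

lemma ereal_mul_le_iff {c : ℝ} (hc : 0 < c) (x : EReal) (R : ℝ) :
    (c : EReal) * x ≤ (R : EReal) ↔ x ≤ ((R / c : ℝ) : EReal) := by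
  constructor
  · intro h
    have h2 := mul_le_mul_of_nonneg_left h
      (by exact_mod_cast (inv_nonneg.2 hc.le) : (0:EReal) ≤ ((c⁻¹ : ℝ) : EReal))
    rw [← mul_assoc, ← EReal.coe_mul, inv_mul_cancel₀ hc.ne', EReal.coe_one, one_mul,
      ← EReal.coe_mul, inv_mul_eq_div] at h2
    exact h2
  · intro h
    have h2 := mul_le_mul_of_nonneg_left h (by exact_mod_cast hc.le : (0:EReal) ≤ ((c : ℝ) : EReal))
    rwa [← EReal.coe_mul, mul_div_cancel₀ _ hc.ne'] at h2

lemma elog_le_iff {c : ℝ} (hc : 0 < c) (m : ENNReal) (R : ℝ) :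
    elog c m ≤ (R : EReal) ↔ m ≤ ENNReal.ofReal (Real.exp (R / c)) := by
  rw [elog, ereal_mul_le_iff hc]
  rw [← ENNReal.log_le_log_iff, ENNReal.log_ofReal_of_pos (Real.exp_pos _), Real.log_exp]

lemma split {ι : Type*} (μ : ι → Measure ℝ) (c : ι → ℝ) (i : ι)
    {u s v : ℝ} (K : ℝ) (hus : u ≤ s) (hsv : s ≤ v) (hci : 0 < c i) :
    M μ c i s ≤ ENNReal.ofReal (Real.exp ((s - u) * K / c i)) * M μ c i u
      + ENNReal.ofReal (Real.exp ((s - v) * K / c i)) * M μ c i v := by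
  set co := c i with hco
  have hpt : ∀ x : ℝ, ENNReal.ofReal (Real.exp (s * x / co)) ≤
      ENNReal.ofReal (Real.exp ((s - u) * K / co)) * ENNReal.ofReal (Real.exp (u * x / co))
      + ENNReal.ofReal (Real.exp ((s - v) * K / co)) * ENNReal.ofReal (Real.exp (v * x / co)) := by
    intro x
    rcases le_or_gt x K with hx | hx
    · refine le_trans ?_ le_self_add
      rw [← ENNReal.ofReal_mul (Real.exp_nonneg _), ← Real.exp_add]
      apply ENNReal.ofReal_le_ofReal
      apply Real.exp_le_exp.2
      rw [← add_div]
      apply div_le_div_of_nonneg_right ?_ hci.le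
      nlinarith [mul_le_mul_of_nonneg_left hx (by linarith : (0:ℝ) ≤ s - u)]
    · refine le_trans ?_ le_add_self
      rw [← ENNReal.ofReal_mul (Real.exp_nonneg _), ← Real.exp_add]
      apply ENNReal.ofReal_le_ofReal
      apply Real.exp_le_exp.2
      rw [← add_div]
      apply div_le_div_of_nonneg_right ?_ hci.le
      nlinarith [mul_le_mul_of_nonpos_left hx.le (by linarith : s - v ≤ 0)]
  calc M μ c i s ≤ ∫⁻ x, (ENNReal.ofReal (Real.exp ((s - u) * K / co))
        * ENNReal.ofReal (Real.exp (u * x / co))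
      + ENNReal.ofReal (Real.exp ((s - v) * K / co))
        * ENNReal.ofReal (Real.exp (v * x / co))) ∂ (μ i) :=
        lintegral_mono hpt
    _ = _ := by
        rw [lintegral_add_left ((meas_integrand u co).const_mul _),
          lintegral_const_mul _ (meas_integrand u co),
          lintegral_const_mul _ (meas_integrand v co)]
        rfl

lemma lemmaG {ι : Type*} (lf : Filter ι) [lf.NeBot]
    (μ : ι → Measure ℝ) (c : ι → ℝ) (hc : ∀ i, 0 < c i)
    (hc0 : Filter.Tendsto c lf (nhds (0 : ℝ)))
    {u t v : ℝ} (hut : u ≤ t) (htv : t ≤ v)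
    (h : ∀ R : ℝ, ∃ K S₁ S₂ : ℝ, (t - u) * K + S₁ ≤ R ∧ (t - v) * K + S₂ ≤ R ∧
      (∀ᶠ i in lf, elog (c i) (M μ c i u) ≤ (S₁ : EReal)) ∧
      (∀ᶠ i in lf, elog (c i) (M μ c i v) ≤ (S₂ : EReal))) :
    Filter.limsup (fun i => elog (c i) (M μ c i t)) lf = ⊥ := by
  have key : ∀ R : ℝ, Filter.limsup (fun i => elog (c i) (M μ c i t)) lf ≤ (R : EReal) := by
    intro R
    obtain ⟨K, S₁, S₂, hK1, hK2, he1, he2⟩ := h (R - 1)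
    have hcsm : ∀ᶠ i in lf, c i ≤ 1 := hc0.eventually (eventually_le_nhds one_pos)
    refine Filter.limsup_le_of_le (by isBoundedDefault) ?_
    filter_upwards [he1, he2, hcsm] with i h1i h2i hci1
    have hci := hc i
    rw [elog_le_iff hci]
    calc M μ c i t
        ≤ ENNReal.ofReal (Real.exp ((t - u) * K / c i)) * M μ c i u
          + ENNReal.ofReal (Real.exp ((t - v) * K / c i)) * M μ c i v :=
          split μ c i K hut htv hci
      _ ≤ ENNReal.ofReal (Real.exp ((t - u) * K / c i)) * ENNReal.ofReal (Real.exp (S₁ / c i))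
          + ENNReal.ofReal (Real.exp ((t - v) * K / c i))
            * ENNReal.ofReal (Real.exp (S₂ / c i)) :=
          add_le_add (mul_le_mul_right ((elog_le_iff hci _ _).1 h1i) _)
            (mul_le_mul_right ((elog_le_iff hci _ _).1 h2i) _)
      _ = ENNReal.ofReal (Real.exp (((t - u) * K + S₁) / c i))
          + ENNReal.ofReal (Real.exp (((t - v) * K + S₂) / c i)) := by
          rw [← ENNReal.ofReal_mul (Real.exp_nonneg _), ← Real.exp_add, ← add_div,
            ← ENNReal.ofReal_mul (Real.exp_nonneg _), ← Real.exp_add, ← add_div]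
      _ ≤ ENNReal.ofReal (Real.exp ((R - 1) / c i)) + ENNReal.ofReal (Real.exp ((R - 1) / c i)) :=
          add_le_add (ENNReal.ofReal_le_ofReal (Real.exp_le_exp.2
              (div_le_div_of_nonneg_right hK1 hci.le)))
            (ENNReal.ofReal_le_ofReal (Real.exp_le_exp.2
              (div_le_div_of_nonneg_right hK2 hci.le)))
      _ ≤ ENNReal.ofReal (Real.exp (R / c i)) := by
          rw [← ENNReal.ofReal_add (Real.exp_nonneg _) (Real.exp_nonneg _)]
          apply ENNReal.ofReal_le_ofReal
          have hexp : (1:ℝ) ≤ 1 / c i := by rw [le_div_iff₀ hci]; linarith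
          have heq : Real.exp (R / c i) = Real.exp ((R - 1) / c i) * Real.exp (1 / c i) := by
            rw [← Real.exp_add]; ring_nf
          nlinarith [Real.add_one_le_exp (1 / c i), Real.exp_pos ((R - 1) / c i)]
  rw [EReal.eq_bot_iff_forall_lt]
  intro y
  exact lt_of_le_of_lt (key (y - 1)) (EReal.coe_lt_coe_iff.2 (sub_one_lt y))

lemma L_zero {ι : Type*} (lf : Filter ι) [lf.NeBot]
    (μ : ι → Measure ℝ) [∀ i, IsProbabilityMeasure (μ i)] (c : ι → ℝ) :
    Filter.limsup (fun i => elog (c i) (M μ c i 0)) lf = 0 := by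
  have : (fun i => elog (c i) (M μ c i 0)) = fun _ => (0 : EReal) := by
    funext i
    rw [M_zero, elog]
    simp
  rw [this, Filter.limsup_const]

lemma ev_le_of_limsup_bot {ι : Type*} {lf : Filter ι} {f : ι → EReal}
    (h : Filter.limsup f lf = ⊥) (S : ℝ) : ∀ᶠ i in lf, f i ≤ (S : EReal) := by
  have := Filter.eventually_lt_of_limsup_lt (b := (S : EReal))
    (by rw [h]; exact EReal.bot_lt_coe S)
  filter_upwards [this] with i hi using hi.le

lemma lemmaA {ι : Type*} (lf : Filter ι) [lf.NeBot]
    (μ : ι → Measure ℝ) [∀ i, IsProbabilityMeasure (μ i)]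
    (c : ι → ℝ) (hc : ∀ i, 0 < c i) (hc0 : Filter.Tendsto c lf (nhds (0 : ℝ)))
    {u t : ℝ} (hu : 0 < u) (hut : u < t)
    (ht : Filter.limsup (fun i => elog (c i) (M μ c i t)) lf = ⊥) :
    Filter.limsup (fun i => elog (c i) (M μ c i u)) lf = ⊥ := by
  apply lemmaG lf μ c hc hc0 hu.le hut.le
  intro R
  refine ⟨R / u, 0, R - (u - t) * (R / u), ?_, ?_, ?_, ?_⟩
  · rw [sub_zero, add_zero, mul_div_cancel₀ _ hu.ne']
  · ring_nf; exact le_refl _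
  · filter_upwards with i
    rw [M_zero, elog]
    simp
  · exact ev_le_of_limsup_bot ht _

lemma lemmaB {ι : Type*} (lf : Filter ι) [lf.NeBot]
    (μ : ι → Measure ℝ) [∀ i, IsProbabilityMeasure (μ i)]
    (c : ι → ℝ) (hc : ∀ i, 0 < c i) (hc0 : Filter.Tendsto c lf (nhds (0 : ℝ)))
    {u t v : ℝ} (hut : u < t) (htv : t < v)
    (hbu : Filter.limsup (fun i => elog (c i) (M μ c i u)) lf = ⊥)
    (hbv : Filter.limsup (fun i => elog (c i) (M μ c i v)) lf ≠ ⊤) :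
    Filter.limsup (fun i => elog (c i) (M μ c i t)) lf = ⊥ := by
  obtain ⟨B₀, hB₀, -⟩ := EReal.lt_iff_exists_real_btwn.1 (lt_top_iff_ne_top.2 hbv)
  apply lemmaG lf μ c hc hc0 hut.le htv.le
  intro R
  refine ⟨(B₀ - R) / (v - t), R - (t - u) * ((B₀ - R) / (v - t)), B₀, ?_, ?_, ?_, ?_⟩
  · ring_nf; exact le_refl _
  · have hvt : v - t ≠ 0 := ne_of_gt (by linarith)
    have : (t - v) * ((B₀ - R) / (v - t)) = R - B₀ := by field_simp; ring
    rw [this]; ring_nf; exact le_refl _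
  · exact ev_le_of_limsup_bot hbu _
  · filter_upwards [Filter.eventually_lt_of_limsup_lt hB₀] with i hi using hi.le

end S7
end S7sec

theorem statement7
    {ι : Type*} (lf : Filter ι) [lf.NeBot]
    (μ : ι → Measure ℝ) [∀ i, IsProbabilityMeasure (μ i)]
    (c : ι → ℝ) (hc : ∀ i, 0 < c i) (hc0 : Filter.Tendsto c lf (nhds (0 : ℝ)))
    (L : ℝ → EReal) (hL : L = genLogMGF lf μ c)
    :
    ¬ LbarProper L ↔ ∃ T : EReal, 0 < T ∧
      (∀ t : ℝ, 0 < t → (t : EReal) < T → L t = ⊥) ∧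
      (∀ s : ℝ, 0 ≤ s → (s : EReal) < T → rightDerivE L s = ⊥) ∧
      (∀ t : ℝ, T < (t : EReal) → L t = ⊤) ∧
      (∀ s : ℝ, 0 ≤ s → T ≤ (s : EReal) → rightDerivE L s = ⊤) := by
  have hLdef : ∀ t : ℝ, L t = Filter.limsup (fun i => elog (c i) (S7.M μ c i t)) lf := by
    intro t; rw [hL]; rfl
  have hL0 : L 0 = 0 := by rw [hLdef]; exact S7.L_zero lf μ c
  have hdown : ∀ u t : ℝ, 0 < u → u < t → L t = ⊥ → L u = ⊥ := by
    intro u t hu hut ht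
    rw [hLdef] at ht ⊢
    exact S7.lemmaA lf μ c hc hc0 hu hut ht
  have hmid : ∀ u t v : ℝ, u < t → t < v → L u = ⊥ → L v ≠ ⊤ → L t = ⊥ := by
    intro u t v hut htv hbu hbv
    rw [hLdef] at hbu hbv ⊢
    exact S7.lemmaB lf μ c hc hc0 hut htv hbu hbv
  constructor
  · intro hnp
    have hex : ∃ t : ℝ, 0 < t ∧ L t = ⊥ := by
      rcases not_and_or.1 hnp with h | h
      · push_neg at h
        obtain ⟨t, ht0, htb⟩ := h
        rcases eq_or_lt_of_le ht0 with h0 | h0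
        · exact absurd (h0 ▸ htb).symm (by rw [hL0]; simp)
        · exact ⟨t, h0, htb⟩
      · push_neg at h
        exact absurd (h 0 le_rfl) (by rw [hL0]; simp)
    obtain ⟨t₀, ht₀, hbot⟩ := hex
    by_cases hall : ∀ t : ℝ, 0 < t → L t = ⊥
    · refine ⟨⊤, by simp, fun t ht _ => hall t ht, ?_, ?_, ?_⟩
      · intro s hs _
        rw [rightDerivE, if_neg, if_pos]
        · exact ⟨s + 1, by linarith, hall _ (by linarith)⟩
        · push_neg
          exact ⟨s + 1, by linarith, by rw [hall _ (by linarith)]; exact bot_ne_top⟩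
      · intro t ht; exact absurd ht not_top_lt
      · intro s _ hs; exact absurd (top_le_iff.1 hs) (EReal.coe_ne_top s)
    · push_neg at hall
      obtain ⟨w, hw, hwne⟩ := hall
      set S : Set ℝ := {t : ℝ | 0 < t ∧ L t = ⊥} with hS
      have hmemS : t₀ ∈ S := ⟨ht₀, hbot⟩
      have hSub : ∀ x ∈ S, x ≤ w := by
        intro x hx
        by_contra hxw
        exact hwne (hdown w x hw (not_le.1 hxw) hx.2)
      have hbdd : BddAbove S := ⟨w, hSub⟩
      set T₀ := sSup S with hT₀
      have ht₀T : t₀ ≤ T₀ := le_csSup hbdd hmemS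
      have hT₀pos : 0 < T₀ := lt_of_lt_of_le ht₀ ht₀T
      have hbelow : ∀ t : ℝ, 0 < t → t < T₀ → L t = ⊥ := by
        intro t ht htT
        obtain ⟨x, hxS, hx⟩ := exists_lt_of_lt_csSup ⟨t₀, hmemS⟩ htT
        exact hdown t x ht hx hxS.2
      have habove : ∀ t : ℝ, T₀ < t → L t = ⊤ := by
        intro t htT
        by_contra hne
        have hmem : (T₀ + t) / 2 ∈ S :=
          ⟨by linarith, hmid t₀ ((T₀ + t) / 2) t (by linarith) (by linarith) hbot hne⟩
        have := le_csSup hbdd hmem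
        linarith
      refine ⟨(T₀ : EReal), by exact_mod_cast hT₀pos, ?_, ?_, ?_, ?_⟩
      · intro t ht htT
        exact hbelow t ht (by exact_mod_cast htT)
      · intro s hs hsT
        have hsT' : s < T₀ := by exact_mod_cast hsT
        rw [rightDerivE, if_neg, if_pos]
        · exact ⟨(s + T₀) / 2, by linarith, hbelow _ (by linarith) (by linarith)⟩
        · push_neg
          refine ⟨(s + T₀) / 2, by linarith, ?_⟩
          rw [hbelow _ (by linarith) (by linarith)]
          exact bot_ne_top
      · intro t htT
        exact habove t (by exact_mod_cast htT)
      · intro s hs hsT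
        have hsT' : T₀ ≤ s := by exact_mod_cast hsT
        rw [rightDerivE, if_pos]
        intro x hx
        exact habove x (by linarith [hx])
  · rintro ⟨T, hTpos, h1, -, -, -⟩ hproper
    obtain ⟨x, hx0, hxT⟩ := EReal.lt_iff_exists_real_btwn.1 hTpos
    have hx : (0:ℝ) < x := by exact_mod_cast hx0
    exact hproper.1 x hx.le (h1 x hx hxT)
end

section
/- Let λ ≥ 0 and assume L̄|[0,+∞) is proper. Then L̄'_r(λ⁺) is a limit point of the set {L̄'_r(t) : t > λ} ∩ (L̄'_r(λ⁺), +∞) (i.e. there is a sequence (λ_i) with L̄'_r(λ⁺) < L̄'_r(λ_i) < +∞ and L̄'_r(λ_i) → L̄'_r(λ⁺)) if and only if there exists λ̃ ∈ [λ, +∞) satisfying L̄'_r(λ⁺) = L̄'_r(λ̃⁺) and L̄'_r(t) > L̄'_r(λ⁺) for all t > λ̃. In that case such λ̃ is unique, λ̃ = sup{t > λ : L̄ is affine on (λ, t]}, and λ̃ = lim_i λ_i for every sequence (λ_i) as above. -/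
open Filter MeasureTheory Set Topology

noncomputable section
namespace S9aux

lemma coe_mul_add_of_nonneg {r : ℝ} (hr : 0 ≤ r) (x y : EReal) :
    (r : EReal) * (x + y) = (r : EReal) * x + (r : EReal) * y := by
  rcases eq_or_lt_of_le hr with h | h
  · simp [← h]
  · induction x with
    | bot => simp [EReal.coe_mul_bot_of_pos h]
    | top =>
      induction y with
      | bot => simp [EReal.coe_mul_bot_of_pos h, EReal.coe_mul_top_of_pos h]
      | coe y => simp [EReal.coe_mul_top_of_pos h, ← EReal.coe_mul, EReal.top_add_coe,
          EReal.coe_add_top]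
      | top => simp [EReal.coe_mul_top_of_pos h]
    | coe x =>
      induction y with
      | bot => simp [EReal.coe_mul_bot_of_pos h, ← EReal.coe_mul]
      | coe y => norm_cast; ring
      | top => simp [EReal.coe_mul_top_of_pos h, ← EReal.coe_mul, EReal.coe_add_top]

def mulIso (r : ℝ) (hr : 0 < r) : EReal ≃o EReal where
  toFun x := (r : EReal) * x
  invFun x := ((r⁻¹ : ℝ) : EReal) * x
  left_inv x := by
    show ((r⁻¹:ℝ):EReal) * ((r:EReal) * x) = x
    rw [← mul_assoc, ← EReal.coe_mul, inv_mul_cancel₀ hr.ne', EReal.coe_one, one_mul]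
  right_inv x := by
    show ((r:ℝ):EReal) * (((r⁻¹:ℝ):EReal) * x) = x
    rw [← mul_assoc, ← EReal.coe_mul, mul_inv_cancel₀ hr.ne', EReal.coe_one, one_mul]
  map_rel_iff' := by
    intro x y
    simp only [Equiv.coe_fn_mk]
    constructor
    · intro h
      have h2 := mul_le_mul_of_nonneg_left h
        (by exact_mod_cast (inv_pos.2 hr).le : (0:EReal) ≤ ((r⁻¹ : ℝ) : EReal))
      rwa [← mul_assoc, ← mul_assoc, ← EReal.coe_mul, inv_mul_cancel₀ hr.ne', EReal.coe_one,
        one_mul, one_mul] at h2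
    · intro h
      exact mul_le_mul_of_nonneg_left h (by exact_mod_cast hr.le)

lemma limsup_coe_mul {ι : Type*} {lf : Filter ι} {r : ℝ} (hr : 0 < r) (u : ι → EReal) :
    Filter.limsup (fun i => (r : EReal) * u i) lf = (r : EReal) * Filter.limsup u lf :=
  ((mulIso r hr).limsup_apply (u := u)).symm

lemma mul_ne_bot_of_ne_bot {r : ℝ} (hr : 0 < r) {x : EReal} (hx : x ≠ ⊥) :
    (r : EReal) * x ≠ ⊥ := by
  intro h
  apply hx
  have h2 : (mulIso r hr) x = (mulIso r hr) ⊥ := by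
    show (r : EReal) * x = (r : EReal) * ⊥
    rw [h, EReal.coe_mul_bot_of_pos hr]
  exact (mulIso r hr).injective h2



section PartI
variable {ι : Type*} (lf : Filter ι) [lf.NeBot] (μ : ι → MeasureTheory.Measure ℝ)
  [∀ i, MeasureTheory.IsProbabilityMeasure (μ i)] (c : ι → ℝ)

lemma genLogMGF_zero : genLogMGF lf μ c 0 = 0 := by
  unfold genLogMGF elog
  have h : ∀ i, (∫⁻ x : ℝ, ENNReal.ofReal (Real.exp (0 * x / c i)) ∂ (μ i)) = 1 := by
    intro i
    simp [Real.exp_zero, MeasureTheory.lintegral_one]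
  simp only [h, ENNReal.log_one, mul_zero]
  exact limsup_const 0

lemma genLogMGF_convex (hc : ∀ i, 0 < c i) {a b d : ℝ} (hab : a < b) (hbd : b < d)
    (ha : genLogMGF lf μ c a ≠ ⊥) (hd : genLogMGF lf μ c d ≠ ⊥) :
    genLogMGF lf μ c b ≤ (((d - b) / (d - a) : ℝ) : EReal) * genLogMGF lf μ c a
      + (((b - a) / (d - a) : ℝ) : EReal) * genLogMGF lf μ c d := by
  have hda : (0:ℝ) < d - a := by linarith
  set θ : ℝ := (d - b) / (d - a) with hθdef
  set θ' : ℝ := (b - a) / (d - a) with hθ'def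
  have hθ : 0 < θ := div_pos (by linarith) hda
  have hθ' : 0 < θ' := div_pos (by linarith) hda
  have hsum : θ + θ' = 1 := by
    rw [hθdef, hθ'def, ← add_div, div_eq_one_iff_eq hda.ne']; ring
  have hθ1 : θ < 1 := by nlinarith
  set F : ℝ → ι → EReal :=
    fun t i => elog (c i) (∫⁻ x : ℝ, ENNReal.ofReal (Real.exp (t * x / c i)) ∂ (μ i)) with hF
  have key : ∀ i, F b i ≤ (θ : EReal) * F a i + (θ' : EReal) * F d i := by
    intro i
    have hmeas : ∀ t : ℝ, Measurable (fun x : ℝ => ENNReal.ofReal (Real.exp (θ * (t * x / c i)))) := by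
      intro t
      exact ENNReal.measurable_ofReal.comp (Real.measurable_exp.comp
        (((measurable_const.mul measurable_id).div_const _).const_mul _))
    have hmeas' : Measurable (fun x : ℝ => ENNReal.ofReal (Real.exp (θ' * (d * x / c i)))) := by
      exact ENNReal.measurable_ofReal.comp (Real.measurable_exp.comp
        (((measurable_const.mul measurable_id).div_const _).const_mul _))
    have hpq : Real.HolderConjugate (1/θ) (1/θ') := by
      rw [Real.holderConjugate_iff]
      constructor
      · rw [lt_div_iff₀ hθ, one_mul]; exact hθ1
      · simp only [one_div, inv_inv]; exact hsum
    have H := ENNReal.lintegral_mul_le_Lp_mul_Lq (μ i) hpq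
      ((hmeas a).aemeasurable) (hmeas'.aemeasurable)
    have e1 : ∀ x : ℝ, ((fun x : ℝ => ENNReal.ofReal (Real.exp (θ * (a * x / c i)))) *
        (fun x : ℝ => ENNReal.ofReal (Real.exp (θ' * (d * x / c i))))) x
        = ENNReal.ofReal (Real.exp (b * x / c i)) := by
      intro x
      simp only [Pi.mul_apply]
      rw [← ENNReal.ofReal_mul (Real.exp_nonneg _), ← Real.exp_add]
      congr 2
      rw [hθdef, hθ'def]
      field_simp [hda.ne', (hc i).ne']
      ring
    have e2 : ∀ x : ℝ, (ENNReal.ofReal (Real.exp (θ * (a * x / c i)))) ^ (1/θ)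
        = ENNReal.ofReal (Real.exp (a * x / c i)) := by
      intro x
      rw [ENNReal.ofReal_rpow_of_pos (Real.exp_pos _), ← Real.exp_mul]
      congr 1
      rw [mul_comm, ← mul_assoc, one_div, inv_mul_cancel₀ hθ.ne', one_mul]
    have e3 : ∀ x : ℝ, (ENNReal.ofReal (Real.exp (θ' * (d * x / c i)))) ^ (1/θ')
        = ENNReal.ofReal (Real.exp (d * x / c i)) := by
      intro x
      rw [ENNReal.ofReal_rpow_of_pos (Real.exp_pos _), ← Real.exp_mul]
      congr 1
      rw [mul_comm, ← mul_assoc, one_div, inv_mul_cancel₀ hθ'.ne', one_mul]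
    simp only [e1] at H
    have h1θ : (1:ℝ)/(1/θ) = θ := by field_simp
    have h1θ' : (1:ℝ)/(1/θ') = θ' := by field_simp
    rw [lintegral_congr e2, lintegral_congr e3, h1θ, h1θ'] at H
    -- now H : ∫ b ≤ (∫ a) ^ θ * (∫ d) ^ θ'
    have hlog := ENNReal.log_monotone H
    rw [ENNReal.log_mul_add, ENNReal.log_rpow, ENNReal.log_rpow] at hlog
    have := mul_le_mul_of_nonneg_left hlog
      (by exact_mod_cast (hc i).le : (0:EReal) ≤ ((c i : ℝ) : EReal))
    rw [S9aux.coe_mul_add_of_nonneg (hc i).le] at this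
    calc F b i ≤ (c i : EReal) * ((θ : EReal) * ENNReal.log
          (∫⁻ x : ℝ, ENNReal.ofReal (Real.exp (a * x / c i)) ∂ (μ i)))
        + (c i : EReal) * ((θ' : EReal) * ENNReal.log
          (∫⁻ x : ℝ, ENNReal.ofReal (Real.exp (d * x / c i)) ∂ (μ i))) := this
      _ = (θ : EReal) * F a i + (θ' : EReal) * F d i := by
          rw [hF]; unfold elog
          rw [mul_left_comm, mul_left_comm ((c i : ℝ) : EReal)]
  calc genLogMGF lf μ c b
      ≤ Filter.limsup (fun i => (θ : EReal) * F a i + (θ' : EReal) * F d i) lf :=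
        Filter.limsup_le_limsup (Filter.Eventually.of_forall key)
    _ ≤ Filter.limsup (fun i => (θ : EReal) * F a i) lf
        + Filter.limsup (fun i => (θ' : EReal) * F d i) lf := by
        apply EReal.limsup_add_le
        · left
          rw [S9aux.limsup_coe_mul hθ]
          exact S9aux.mul_ne_bot_of_ne_bot hθ ha
        · right
          rw [S9aux.limsup_coe_mul hθ']
          exact S9aux.mul_ne_bot_of_ne_bot hθ' hd
    _ = (θ : EReal) * genLogMGF lf μ c a + (θ' : EReal) * genLogMGF lf μ c d := by
        rw [S9aux.limsup_coe_mul hθ, S9aux.limsup_coe_mul hθ']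
        rfl

end PartI



def QQ (L : ℝ → EReal) (t s : ℝ) : EReal := (L s - L t) * (((s - t)⁻¹ : ℝ) : EReal)

section PartII

variable {L : ℝ → EReal}
  (hbot : ∀ t : ℝ, 0 ≤ t → L t ≠ ⊥)
  (hzero : L 0 = 0)
  (hcvx : ∀ ⦃a b d : ℝ⦄, 0 ≤ a → a < b → b < d → L a ≠ ⊤ → L d ≠ ⊤ →
    L b ≠ ⊤ ∧ (d - a) * (L b).toReal ≤ (d - b) * (L a).toReal + (b - a) * (L d).toReal)

include hbot hzero hcvx

omit hbot in
lemma hFdown : ∀ a b : ℝ, 0 ≤ a → a ≤ b → L b ≠ ⊤ → L a ≠ ⊤ := by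
  intro a b ha hab hb
  rcases eq_or_lt_of_le ha with h0 | h0
  · rw [← h0, hzero]; simp
  · rcases eq_or_lt_of_le hab with h1 | h1
    · rwa [h1]
    · have hz : L 0 ≠ ⊤ := by rw [hzero]; simp
      exact (hcvx (le_refl 0) h0 h1 hz hb).1

omit hzero hcvx in
lemma QQ_coe {t s : ℝ} (hts : t < s) (ht0 : 0 ≤ t) (htT : L t ≠ ⊤) (hsT : L s ≠ ⊤) :
    QQ L t s = ((((L s).toReal - (L t).toReal) * (s - t)⁻¹ : ℝ) : EReal) := by
  rw [QQ, ← EReal.coe_toReal htT (hbot t ht0),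
    ← EReal.coe_toReal hsT (hbot s (le_of_lt (lt_of_le_of_lt ht0 hts)))]
  norm_cast

omit hzero hcvx in
lemma QQ_top {t s : ℝ} (hts : t < s) (ht0 : 0 ≤ t) (htT : L t ≠ ⊤) (hsT : L s = ⊤) :
    QQ L t s = ⊤ := by
  rw [QQ, hsT, ← EReal.coe_toReal htT (hbot t ht0), EReal.top_sub_coe,
    EReal.top_mul_coe_of_pos (inv_pos.2 (by linarith))]

omit hzero hcvx in
lemma D_eq {t : ℝ} (ht : 0 ≤ t) (htT : L t ≠ ⊤) :
    rightDerivE L t = ⨅ s ∈ Set.Ioi t, QQ L t s := by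
  rw [rightDerivE]
  by_cases h1 : ∀ s : ℝ, t < s → L s = ⊤
  · rw [if_pos h1]
    symm
    rw [iInf₂_eq_top]
    exact fun s hs => QQ_top hbot hs ht htT (h1 s hs)
  · rw [if_neg h1, if_neg]
    · rfl
    · rintro ⟨s, hs, hsb⟩
      exact hbot s (le_of_lt (lt_of_le_of_lt ht hs)) hsb

omit hbot in
lemma D_top {t : ℝ} (ht : 0 ≤ t) (htT : L t = ⊤) : rightDerivE L t = ⊤ := by
  rw [rightDerivE, if_pos]
  intro s hs
  by_contra h
  exact (hFdown hzero hcvx t s ht hs.le h) htT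

lemma slope_mono {t s s' : ℝ} (ht0 : 0 ≤ t) (htT : L t ≠ ⊤) (h1 : t < s) (h2 : s < s') :
    QQ L t s ≤ QQ L t s' := by
  by_cases hs' : L s' = ⊤
  · rw [QQ_top hbot (h1.trans h2) ht0 htT hs']
    exact le_top
  · obtain ⟨hsT, hineq⟩ := hcvx ht0 h1 h2 htT hs'
    rw [QQ_coe hbot h1 ht0 htT hsT, QQ_coe hbot (h1.trans h2) ht0 htT hs']
    apply EReal.coe_le_coe_iff.2
    rw [← div_eq_mul_inv, ← div_eq_mul_inv, div_le_div_iff₀ (by linarith) (by linarith)]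
    nlinarith [hineq]

lemma slope_chain {a b d : ℝ} (ha0 : 0 ≤ a) (h1 : a < b) (h2 : b < d)
    (haT : L a ≠ ⊤) (hbT : L b ≠ ⊤) : QQ L a d ≤ QQ L b d := by
  have hb0 : 0 ≤ b := le_of_lt (lt_of_le_of_lt ha0 h1)
  by_cases hd : L d = ⊤
  · rw [QQ_top hbot h2 hb0 hbT hd]
    exact le_top
  · obtain ⟨_, hineq⟩ := hcvx ha0 h1 h2 haT hd
    rw [QQ_coe hbot (h1.trans h2) ha0 haT hd, QQ_coe hbot h2 hb0 hbT hd]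
    apply EReal.coe_le_coe_iff.2
    rw [← div_eq_mul_inv, ← div_eq_mul_inv, div_le_div_iff₀ (by linarith) (by linarith)]
    nlinarith [hineq]

omit hzero hcvx in
lemma D_le_QQ {t s : ℝ} (ht : 0 ≤ t) (htT : L t ≠ ⊤) (h : t < s) :
    rightDerivE L t ≤ QQ L t s := by
  rw [D_eq hbot ht htT]
  exact iInf₂_le s h

lemma QQ_le_D {a t : ℝ} (ha0 : 0 ≤ a) (hat : a < t) (htT : L t ≠ ⊤) :
    QQ L a t ≤ rightDerivE L t := by
  have ht0 : 0 ≤ t := le_of_lt (lt_of_le_of_lt ha0 hat)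
  have haT : L a ≠ ⊤ := hFdown hzero hcvx a t ha0 hat.le htT
  rw [D_eq hbot ht0 htT]
  apply le_iInf₂
  intro s hs
  exact le_trans (slope_mono hbot hzero hcvx ha0 haT hat hs)
    (slope_chain hbot hzero hcvx ha0 hat hs haT htT)

lemma D_mono {t t' : ℝ} (h0 : 0 ≤ t) (h : t ≤ t') :
    rightDerivE L t ≤ rightDerivE L t' := by
  rcases eq_or_lt_of_le h with rfl | hlt
  · exact le_refl _
  · have ht'0 : 0 ≤ t' := le_trans h0 h
    by_cases ht'T : L t' = ⊤
    · rw [D_top hzero hcvx ht'0 ht'T]; exact le_top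
    · have htT : L t ≠ ⊤ := hFdown hzero hcvx t t' h0 h ht'T
      rw [D_eq hbot ht'0 ht'T]
      apply le_iInf₂
      intro s hs
      exact le_trans (D_le_QQ hbot h0 htT (hlt.trans hs))
        (slope_chain hbot hzero hcvx h0 hlt hs htT ht'T)

lemma D_ne_bot {a t : ℝ} (ha0 : 0 ≤ a) (hat : a < t) (htT : L t ≠ ⊤) :
    rightDerivE L t ≠ ⊥ := by
  intro hb
  have h := QQ_le_D hbot hzero hcvx ha0 hat htT
  rw [hb, le_bot_iff, QQ_coe hbot hat ha0 (hFdown hzero hcvx a t ha0 hat.le htT) htT] at h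
  exact EReal.coe_ne_bot _ h

lemma rightLim_eq {a : ℝ} (h0 : 0 ≤ a) :
    rightLimE (rightDerivE L) a = ⨅ t ∈ Set.Ioi a, rightDerivE L t := by
  apply le_antisymm
  · apply le_iInf₂
    intro t ht
    refine Filter.limsup_le_of_le (by isBoundedDefault) ?_
    filter_upwards [Ioo_mem_nhdsGT_of_mem (⟨le_refl a, ht⟩ : a ∈ Set.Ico a t)] with x hx
    exact D_mono hbot hzero hcvx (le_trans h0 hx.1.le) hx.2.le
  · refine Filter.le_limsup_of_frequently_le ?_ (by isBoundedDefault)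
    apply Filter.Eventually.frequently
    filter_upwards [self_mem_nhdsWithin] with x hx
    exact iInf₂_le x hx




lemma D_const_of_affine {lam b p q : ℝ} (hlam : 0 ≤ lam) (hb : lam < b)
    (haff : ∀ s ∈ Set.Ioc lam b, L s = ((p * s + q : ℝ) : EReal)) :
    ∀ s ∈ Set.Ioo lam b, rightDerivE L s = (p : EReal) := by
  intro s hs
  have hsT : L s ≠ ⊤ := by rw [haff s ⟨hs.1, hs.2.le⟩]; exact EReal.coe_ne_top _
  have hs0 : 0 ≤ s := le_of_lt (lt_of_le_of_lt hlam hs.1)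
  have hQ : ∀ u, s < u → u ≤ b → QQ L s u = (p : EReal) := by
    intro u h1 h2
    rw [QQ, haff s ⟨hs.1, hs.2.le⟩, haff u ⟨hs.1.trans h1, h2⟩, ← EReal.coe_sub, ← EReal.coe_mul]
    norm_cast
    have hus : u - s ≠ 0 := by intro h; apply absurd h; intro h'; linarith [h1]
    field_simp
    ring
  rw [D_eq hbot hs0 hsT]
  apply le_antisymm
  · exact iInf₂_le_of_le b hs.2 (le_of_eq (hQ b hs.2 (le_refl b)))
  · apply le_iInf₂
    intro u hu
    rcases le_or_gt u b with h | h
    · exact le_of_eq (hQ u hu h).symm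
    · rw [← hQ b hs.2 (le_refl b)]
      exact slope_mono hbot hzero hcvx hs0 hsT hs.2 h

lemma forward {lam : ℝ} (hlam : 0 ≤ lam) (u : ℕ → ℝ) (hu1 : ∀ n, lam < u n)
    (hu2 : ∀ n, rightLimE (rightDerivE L) lam < rightDerivE L (u n) ∧ rightDerivE L (u n) ≠ ⊤)
    (hu3 : Filter.Tendsto (fun n => rightDerivE L (u n)) Filter.atTop
      (nhds (rightLimE (rightDerivE L) lam))) :
    ∃ lt : ℝ, lam ≤ lt ∧ rightLimE (rightDerivE L) lt = rightLimE (rightDerivE L) lam ∧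
      (∀ t, lt < t → rightLimE (rightDerivE L) lam < rightDerivE L t) ∧ ∀ n, lt < u n := by
  set D := rightDerivE L with hD
  set A := rightLimE D lam with hA
  have hAle : ∀ t, lam < t → A ≤ D t := by
    intro t ht
    rw [hA, rightLim_eq hbot hzero hcvx hlam]
    exact iInf₂_le t ht
  by_cases hS : ∃ t, lam < t ∧ D t = A
  · obtain ⟨t₀, ht₀⟩ := hS
    set S := {t : ℝ | lam < t ∧ D t = A} with hSdef
    have hSne : S.Nonempty := ⟨t₀, ht₀⟩
    have hbdd : BddAbove S := by
      refine ⟨u 0, fun t ht => ?_⟩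
      by_contra hgt
      push_neg at hgt
      have h1 : D (u 0) ≤ D t :=
        D_mono hbot hzero hcvx (le_of_lt (lt_of_le_of_lt hlam (hu1 0))) hgt.le
      rw [ht.2] at h1
      exact absurd (lt_of_lt_of_le (hu2 0).1 h1) (lt_irrefl A)
    set lt := sSup S with hlt
    have hltlam : lam < lt := lt_of_lt_of_le ht₀.1 (le_csSup hbdd ht₀)
    have hflat : ∀ s, lam < s → s < lt → D s = A := by
      intro s h1 h2
      obtain ⟨t, htS, hst⟩ := exists_lt_of_lt_csSup hSne h2
      exact le_antisymm
        (htS.2 ▸ D_mono hbot hzero hcvx (le_trans hlam h1.le) hst.le) (hAle s h1)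
    have hgt' : ∀ t, lt < t → A < D t := by
      intro t ht
      have h1 : lam < t := lt_trans hltlam ht
      rcases lt_or_eq_of_le (hAle t h1) with h | h
      · exact h
      · exact absurd (le_csSup hbdd (⟨h1, h.symm⟩ : t ∈ S)) (not_le.2 ht)
    have hun : ∀ n, lt < u n := by
      intro n
      rcases lt_trichotomy (u n) lt with h | h | h
      · exact absurd (hflat (u n) (hu1 n) h) (ne_of_gt (hu2 n).1)
      · exfalso
        have hge : ∀ m, D lt ≤ D (u m) := by
          intro m
          rcases lt_or_ge (u m) lt with h' | h'
          · exact absurd (hflat _ (hu1 m) h') (ne_of_gt (hu2 m).1)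
          · exact D_mono hbot hzero hcvx (le_trans hlam hltlam.le) h'
        have hle2 : D lt ≤ A := ge_of_tendsto hu3 (Filter.Eventually.of_forall hge)
        have hDlt : A < D lt := h ▸ (hu2 n).1
        exact absurd (lt_of_lt_of_le hDlt hle2) (lt_irrefl A)
      · exact h
    refine ⟨lt, hltlam.le, ?_, hgt', hun⟩
    rw [rightLim_eq hbot hzero hcvx (le_trans hlam hltlam.le)]
    apply le_antisymm
    · exact ge_of_tendsto hu3 (Filter.Eventually.of_forall fun n => iInf₂_le _ (hun n))
    · exact le_iInf₂ fun t ht => hAle t (lt_trans hltlam ht)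
  · push_neg at hS
    exact ⟨lam, le_refl _, rfl, fun t ht => lt_of_le_of_ne (hAle t ht) (Ne.symm (hS t ht)), hu1⟩

lemma backward {lam : ℝ} (hlam : 0 ≤ lam) (lt : ℝ) (hle : lam ≤ lt)
    (heq : rightLimE (rightDerivE L) lt = rightLimE (rightDerivE L) lam)
    (hgt : ∀ t, lt < t → rightLimE (rightDerivE L) lam < rightDerivE L t) :
    ∃ u : ℕ → ℝ, (∀ n, lam < u n) ∧
      (∀ n, rightLimE (rightDerivE L) lam < rightDerivE L (u n) ∧ rightDerivE L (u n) ≠ ⊤) ∧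
      Filter.Tendsto (fun n => rightDerivE L (u n)) Filter.atTop
        (nhds (rightLimE (rightDerivE L) lam)) := by
  set D := rightDerivE L with hD
  set A := rightLimE D lam with hA
  have hAtop : A ≠ ⊤ := fun h => absurd (h ▸ hgt (lt + 1) (by linarith)) not_top_lt
  have hinf : ⨅ t ∈ Set.Ioi lt, D t = A := by
    rw [← rightLim_eq hbot hzero hcvx (le_trans hlam hle)]
    exact heq
  obtain ⟨b, hb1, hb2, hb3⟩ : ∃ b : ℕ → EReal, (∀ n, A < b n) ∧ (∀ n, b n ≠ ⊤) ∧
      Filter.Tendsto b Filter.atTop (nhds A) := by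
    by_cases hAbot : A = ⊥
    · refine ⟨fun n => ((-(n : ℝ) : ℝ) : EReal),
        fun n => hAbot ▸ bot_lt_iff_ne_bot.2 (EReal.coe_ne_bot _),
        fun n => EReal.coe_ne_top _, ?_⟩
      rw [hAbot, EReal.tendsto_nhds_bot_iff_real]
      intro x
      rw [Filter.eventually_atTop]
      refine ⟨⌈-x⌉₊ + 1, fun n hn => ?_⟩
      have h1 : -x ≤ (⌈-x⌉₊ : ℝ) := Nat.le_ceil _
      have h2 : ((⌈-x⌉₊ + 1 : ℕ) : ℝ) ≤ (n : ℝ) := by exact_mod_cast hn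
      push_cast at h2
      exact_mod_cast (by linarith : (-(n : ℝ) : ℝ) < x)
    · set p := A.toReal with hp
      have hA' : A = (p : EReal) := (EReal.coe_toReal hAtop hAbot).symm
      refine ⟨fun n => ((p + 1/((n : ℝ)+1) : ℝ) : EReal), ?_, fun n => EReal.coe_ne_top _, ?_⟩
      · intro n
        rw [hA']
        exact EReal.coe_lt_coe_iff.2 (lt_add_of_pos_right p (by positivity))
      · rw [hA']
        rw [EReal.tendsto_coe]
        simpa using tendsto_const_nhds.add (tendsto_one_div_add_atTop_nhds_zero_nat (𝕜 := ℝ))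
  have hex : ∀ n, ∃ t, lt < t ∧ D t < b n := by
    intro n
    by_contra h
    push_neg at h
    have h2 : b n ≤ ⨅ t ∈ Set.Ioi lt, D t := le_iInf₂ fun t ht => h t ht
    rw [hinf] at h2
    exact absurd (lt_of_lt_of_le (hb1 n) h2) (lt_irrefl _)
  choose t ht1 ht2 using hex
  refine ⟨t, fun n => lt_of_le_of_lt hle (ht1 n), fun n => ⟨hgt _ (ht1 n), ?_⟩, ?_⟩
  · exact fun h => absurd (h ▸ ht2 n) not_top_lt
  · exact tendsto_of_tendsto_of_tendsto_of_le_of_le tendsto_const_nhds hb3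
      (fun n => (hgt _ (ht1 n)).le) (fun n => (ht2 n).le)

lemma tilde_eq {lam : ℝ} (hlam : 0 ≤ lam) (lt : ℝ) (hle : lam ≤ lt)
    (heq : rightLimE (rightDerivE L) lt = rightLimE (rightDerivE L) lam)
    (hgt : ∀ t, lt < t → rightLimE (rightDerivE L) lam < rightDerivE L t) :
    lt = tildeOf L lam := by
  set D := rightDerivE L with hD
  set A := rightLimE D lam with hA
  have hAtop : A ≠ ⊤ := fun h => absurd (h ▸ hgt (lt + 1) (by linarith)) not_top_lt
  have hAle : ∀ t, lam < t → A ≤ D t := by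
    intro t ht
    rw [hA, rightLim_eq hbot hzero hcvx hlam]
    exact iInf₂_le t ht
  rcases eq_or_lt_of_le hle with rfl | hlt
  · have hS' : {t : ℝ | lam < t ∧ AffineOnIoc L lam t} = ∅ := by
      ext x
      simp only [Set.mem_setOf_eq, Set.mem_empty_iff_false, iff_false, not_and]
      intro hx
      rintro ⟨p, q', haff⟩
      have hDc := D_const_of_affine hbot hzero hcvx hlam hx haff
      have h2 : A = (p : EReal) := by
        rw [hA, rightLimE]
        have hev : ∀ᶠ y in nhdsWithin lam (Set.Ioi lam), rightDerivE L y = (p : EReal) := by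
          filter_upwards [Ioo_mem_nhdsGT_of_mem (⟨le_refl lam, hx⟩ : lam ∈ Set.Ico lam x)]
            with y hy
          exact hDc y hy
        rw [Filter.limsup_congr hev]
        exact Filter.limsup_const _
      set s₀ := (lam + x)/2 with hs₀def
      have hs₀ : s₀ ∈ Set.Ioo lam x := ⟨by rw [hs₀def]; linarith, by rw [hs₀def]; linarith⟩
      have h1 : A < D s₀ := hgt s₀ hs₀.1
      rw [show D s₀ = rightDerivE L s₀ from rfl, hDc s₀ hs₀, h2] at h1
      exact lt_irrefl _ h1
    unfold tildeOf
    rw [hS']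
    simp
  · have hDflat : ∀ s, lam < s → s ≤ lt → D s = A := by
      intro s h1 h2
      refine le_antisymm ?_ (hAle s h1)
      have h3 : D s ≤ ⨅ t ∈ Set.Ioi lt, D t :=
        le_iInf₂ fun t ht => D_mono hbot hzero hcvx (le_trans hlam h1.le) (le_trans h2 ht.le)
      rwa [← rightLim_eq hbot hzero hcvx (le_trans hlam hle), heq] at h3
    have hltT : L lt ≠ ⊤ := by
      intro h
      have h2 := D_top hzero hcvx (le_trans hlam hle) h
      rw [show rightDerivE L lt = D lt from rfl, hDflat lt hlt (le_refl _)] at h2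
      exact hAtop h2
    have hfin : ∀ s, lam < s → s ≤ lt → L s ≠ ⊤ := fun s h1 h2 =>
      hFdown hzero hcvx s lt (le_trans hlam h1.le) h2 hltT
    set m := (lam + lt)/2 with hmdef
    have hm : m ∈ Set.Ioo lam lt := ⟨by rw [hmdef]; linarith, by rw [hmdef]; linarith⟩
    have hAbot : A ≠ ⊥ := by
      rw [← hDflat m hm.1 hm.2.le]
      exact D_ne_bot hbot hzero hcvx hlam hm.1 (hfin m hm.1 hm.2.le)
    set p := A.toReal with hpdef
    have hAp : A = (p : EReal) := (EReal.coe_toReal hAtop hAbot).symm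
    have hslope : ∀ s, lam < s → s < lt → QQ L s lt = A := by
      intro s h1 h2
      apply le_antisymm
      · rw [← hDflat lt hlt (le_refl _)]
        exact QQ_le_D hbot hzero hcvx (le_trans hlam h1.le) h2 hltT
      · rw [← hDflat s h1 h2.le]
        exact D_le_QQ hbot (le_trans hlam h1.le) (hfin s h1 h2.le) h2
    have haff : AffineOnIoc L lam lt := by
      refine ⟨p, (L lt).toReal - p * lt, ?_⟩
      intro s hs
      rcases eq_or_lt_of_le hs.2 with rfl | h2
      · conv_lhs => rw [← EReal.coe_toReal hltT (hbot s (le_trans hlam hs.1.le))]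
        norm_cast
        ring
      · have h := hslope s hs.1 h2
        rw [QQ_coe hbot h2 (le_trans hlam hs.1.le) (hfin s hs.1 h2.le) hltT, hAp] at h
        have h3 := EReal.coe_eq_coe_iff.1 h
        conv_lhs => rw [← EReal.coe_toReal (hfin s hs.1 h2.le) (hbot s (le_trans hlam hs.1.le))]
        norm_cast
        have h4 : lt - s ≠ 0 := by intro hx; rw [sub_eq_zero] at hx; linarith
        field_simp at h3
        nlinarith [h3]
    have hub : ∀ x ∈ {t : ℝ | lam < t ∧ AffineOnIoc L lam t}, x ≤ lt := by
      rintro x ⟨hx1, p', q', haff'⟩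
      by_contra hgt2
      push_neg at hgt2
      have hD' := D_const_of_affine hbot hzero hcvx hlam hx1 haff'
      have h1 : rightDerivE L m = (p' : EReal) := hD' m ⟨hm.1, lt_trans hm.2 hgt2⟩
      have h2 : D m = A := hDflat m hm.1 hm.2.le
      set s₁ := (lt + x)/2 with hs₁def
      have hs₁ : s₁ ∈ Set.Ioo lam x := ⟨by rw [hs₁def]; linarith, by rw [hs₁def]; linarith⟩
      have h3 : rightDerivE L s₁ = (p' : EReal) := hD' s₁ hs₁
      have h4 : A < D s₁ := hgt s₁ (by rw [hs₁def]; linarith)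
      rw [show D s₁ = rightDerivE L s₁ from rfl, h3, ← h1, ← hD, h2] at h4
      exact lt_irrefl _ h4
    have hmem : lt ∈ insert lam {t : ℝ | lam < t ∧ AffineOnIoc L lam t} :=
      Set.mem_insert_iff.2 (Or.inr ⟨hlt, haff⟩)
    have hbdd : BddAbove (insert lam {t : ℝ | lam < t ∧ AffineOnIoc L lam t}) := by
      refine ⟨lt, ?_⟩
      rintro x (rfl | hx)
      · exact hle
      · exact hub x hx
    refine le_antisymm (le_csSup hbdd hmem) (csSup_le ⟨lt, hmem⟩ ?_)
    rintro x (rfl | hx)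
    · exact hle
    · exact hub x hx

end PartII
section PartIb
variable {ι : Type*} (lf : Filter ι) [lf.NeBot] (μ : ι → MeasureTheory.Measure ℝ)
  [∀ i, MeasureTheory.IsProbabilityMeasure (μ i)] (c : ι → ℝ)

lemma cvx_package (hc : ∀ i, 0 < c i)
    (hbot : ∀ t : ℝ, 0 ≤ t → genLogMGF lf μ c t ≠ ⊥) :
    ∀ ⦃a b d : ℝ⦄, 0 ≤ a → a < b → b < d → genLogMGF lf μ c a ≠ ⊤ → genLogMGF lf μ c d ≠ ⊤ →
      genLogMGF lf μ c b ≠ ⊤ ∧ (d - a) * (genLogMGF lf μ c b).toReal ≤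
        (d - b) * (genLogMGF lf μ c a).toReal + (b - a) * (genLogMGF lf μ c d).toReal := by
  intro a b d ha hab hbd haT hdT
  have hb0 : 0 ≤ b := le_of_lt (lt_of_le_of_lt ha hab)
  have hd0 : 0 ≤ d := by linarith
  have key := genLogMGF_convex lf μ c hc hab hbd (hbot a ha) (hbot d hd0)
  set ra := (genLogMGF lf μ c a).toReal with hra
  set rd := (genLogMGF lf μ c d).toReal with hrd
  have hea : genLogMGF lf μ c a = (ra : EReal) := (EReal.coe_toReal haT (hbot a ha)).symm
  have hed : genLogMGF lf μ c d = (rd : EReal) := (EReal.coe_toReal hdT (hbot d hd0)).symm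
  rw [hea, hed, ← EReal.coe_mul, ← EReal.coe_mul, ← EReal.coe_add] at key
  have hbT : genLogMGF lf μ c b ≠ ⊤ := ne_top_of_le_ne_top (EReal.coe_ne_top _) key
  refine ⟨hbT, ?_⟩
  set rb := (genLogMGF lf μ c b).toReal with hrb
  have heb : genLogMGF lf μ c b = (rb : EReal) := (EReal.coe_toReal hbT (hbot b hb0)).symm
  rw [heb] at key
  have hreal : rb ≤ (d - b)/(d - a) * ra + (b - a)/(d - a) * rd := EReal.coe_le_coe_iff.1 key
  have hda : (0:ℝ) < d - a := by linarith
  rw [div_mul_eq_mul_div, div_mul_eq_mul_div, ← add_div, le_div_iff₀ hda] at hreal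
  linarith [hreal]

end PartIb

end S9aux
end

theorem statement9
    {ι : Type*} (lf : Filter ι) [lf.NeBot]
    (μ : ι → Measure ℝ) [∀ i, IsProbabilityMeasure (μ i)]
    (c : ι → ℝ) (hc : ∀ i, 0 < c i) (hc0 : Filter.Tendsto c lf (nhds (0 : ℝ)))
    (L : ℝ → EReal) (hL : L = genLogMGF lf μ c)
    (lam : ℝ) (hlam : 0 ≤ lam) (hp : LbarProper L) :
    ((∃ u : ℕ → ℝ, (∀ n, lam < u n) ∧
      (∀ n, rightLimE (rightDerivE L) lam < rightDerivE L (u n) ∧ rightDerivE L (u n) ≠ ⊤) ∧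
      Filter.Tendsto (fun n => rightDerivE L (u n)) Filter.atTop (nhds (rightLimE (rightDerivE L) lam))) ↔
      (∃ lt : ℝ, lam ≤ lt ∧ rightLimE (rightDerivE L) lt = rightLimE (rightDerivE L) lam ∧
        ∀ t : ℝ, lt < t → rightLimE (rightDerivE L) lam < rightDerivE L t)) ∧
    (∀ lt : ℝ, lam ≤ lt → rightLimE (rightDerivE L) lt = rightLimE (rightDerivE L) lam →
      (∀ t : ℝ, lt < t → rightLimE (rightDerivE L) lam < rightDerivE L t) → lt = tildeOf L lam) ∧
    (∀ u : ℕ → ℝ, (∀ n, lam < u n) →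
      (∀ n, rightLimE (rightDerivE L) lam < rightDerivE L (u n) ∧ rightDerivE L (u n) ≠ ⊤) →
      Filter.Tendsto (fun n => rightDerivE L (u n)) Filter.atTop (nhds (rightLimE (rightDerivE L) lam)) →
      Filter.Tendsto u Filter.atTop (nhds (tildeOf L lam))) := by
  subst hL
  set L := genLogMGF lf μ c with hLdef
  have hbot : ∀ t : ℝ, 0 ≤ t → L t ≠ ⊥ := fun t ht => hp.1 t ht
  have hzero : L 0 = 0 := S9aux.genLogMGF_zero lf μ c
  have hcvx : ∀ ⦃a b d : ℝ⦄, 0 ≤ a → a < b → b < d → L a ≠ ⊤ → L d ≠ ⊤ →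
      L b ≠ ⊤ ∧ (d - a) * (L b).toReal ≤ (d - b) * (L a).toReal + (b - a) * (L d).toReal :=
    S9aux.cvx_package lf μ c hc hbot
  refine ⟨⟨?_, ?_⟩, ?_, ?_⟩
  · rintro ⟨u, hu1, hu2, hu3⟩
    obtain ⟨lt, h1, h2, h3, _⟩ := S9aux.forward hbot hzero hcvx hlam u hu1 hu2 hu3
    exact ⟨lt, h1, h2, h3⟩
  · rintro ⟨lt, h1, h2, h3⟩
    obtain ⟨u, hu1, hu2, hu3⟩ := S9aux.backward hbot hzero hcvx hlam lt h1 h2 h3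
    exact ⟨u, hu1, hu2, hu3⟩
  · intro lt h1 h2 h3
    exact S9aux.tilde_eq hbot hzero hcvx hlam lt h1 h2 h3
  · intro u hu1 hu2 hu3
    obtain ⟨lt, h1, h2, h3, hun⟩ := S9aux.forward hbot hzero hcvx hlam u hu1 hu2 hu3
    have heq := S9aux.tilde_eq hbot hzero hcvx hlam lt h1 h2 h3
    rw [← heq]
    rw [tendsto_order]
    constructor
    · intro b hb
      exact Filter.Eventually.of_forall fun n => lt_trans hb (hun n)
    · intro b hb
      have hD := h3 b hb
      have hev : ∀ᶠ n in Filter.atTop, rightDerivE L (u n) < rightDerivE L b :=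
        hu3.eventually_lt_const hD
      filter_upwards [hev] with n hn
      by_contra hc2
      push_neg at hc2
      exact absurd (S9aux.D_mono hbot hzero hcvx (le_trans hlam (le_trans h1 hb.le)) hc2)
        (not_le.2 hn)
end
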